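/- arXiv:2509.10893 — 3 statements merged into one kernel-verified Lean document; each statement's English description precedes it below -/
import Mathlib

section
/- Let G be a compact Hausdorff topological group acting continuously on topological spaces E and B, and let p : E → B be a continuous equivariant map. Then p possesses an equivariant covering function if and only if there exists an extended equivariant covering function over all of B^I. -/
open unitInterval

/-- `p` possesses an equivariant covering function: a continuous equivariant map
`λ : Δ → E^I`, where `Δ = {(e, α) ∈ E × B^I | α 0 = p e}`, with `λ (e, α) 0 = e` and
`p (λ (e, α) t) = α t`. -/
def HasEquivCoveringFunction (G : Type*) [Group G] [TopologicalSpace G]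
    {E B : Type*} [TopologicalSpace E] [TopologicalSpace B]
    [MulAction G E] [MulAction G B] [ContinuousSMul G E] [ContinuousSMul G B]
    (p : E → B) : Prop :=
  ∃ lam : {q : E × C(unitInterval, B) // q.2 0 = p q.1} → C(unitInterval, E),
    Continuous lam ∧
    (∀ (g : G) (q q' : {q : E × C(unitInterval, B) // q.2 0 = p q.1}),
      q'.1 = g • q.1 → lam q' = g • lam q) ∧
    (∀ q, lam q 0 = q.1.1) ∧
    (∀ q t, p (lam q t) = q.1.2 t)

/-- `p` possesses an extended equivariant covering function over all of `B^I`: a continuous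
equivariant map `Λ : Δ_{B^I} → E^I`, where
`Δ_{B^I} = {(e, α, s) ∈ E × B^I × [0,1] | α s = p e}` (with `G` acting trivially on `[0,1]`),
with `Λ (e, α, s) s = e` and `p (Λ (e, α, s) t) = α t`. -/
def HasExtendedEquivCoveringFunction (G : Type*) [Group G] [TopologicalSpace G]
    {E B : Type*} [TopologicalSpace E] [TopologicalSpace B]
    [MulAction G E] [MulAction G B] [ContinuousSMul G E] [ContinuousSMul G B]
    (p : E → B) : Prop :=
  ∃ Lam : {q : E × C(unitInterval, B) × unitInterval // q.2.1 q.2.2 = p q.1} →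
      C(unitInterval, E),
    Continuous Lam ∧
    (∀ (g : G) (q q' : {q : E × C(unitInterval, B) × unitInterval // q.2.1 q.2.2 = p q.1}),
      q'.1.1 = g • q.1.1 → q'.1.2.1 = g • q.1.2.1 → q'.1.2.2 = q.1.2.2 →
      Lam q' = g • Lam q) ∧
    (∀ q, Lam q q.1.2.2 = q.1.1) ∧
    (∀ q t, p (Lam q t) = q.1.2.1 t)

/-- A continuous equivariant map between `G`-spaces of a compact Hausdorff group `G`
possesses an equivariant covering function if and only if there exists an extended
equivariant covering function over all of `B^I`. -/
theorem hasEquivCoveringFunction_iff_hasExtendedEquivCoveringFunction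
    (G : Type*) [Group G] [TopologicalSpace G] [IsTopologicalGroup G]
    [CompactSpace G] [T2Space G]
    {E B : Type*} [TopologicalSpace E] [TopologicalSpace B]
    [MulAction G E] [MulAction G B] [ContinuousSMul G E] [ContinuousSMul G B]
    (p : E → B) (hp : Continuous p)
    (hpe : ∀ (g : G) (e : E), p (g • e) = g • p e) :
    HasEquivCoveringFunction G p ↔ HasExtendedEquivCoveringFunction G p := by
  constructor
  · rintro ⟨lam, hcont, hequiv, h0, hpt⟩
    set clamp : ℝ → unitInterval := Set.projIcc 0 1 zero_le_one with hcl
    have hclc : Continuous clamp := continuous_projIcc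
    have hclval : ∀ x : ℝ, 0 ≤ x → x ≤ 1 → ((clamp x : unitInterval) : ℝ) = x := by
      intro x h0x h1x
      rw [hcl, Set.coe_projIcc 0 1 zero_le_one x]
      simp [min_eq_right h1x, max_eq_right h0x]
    have hclI : ∀ s : unitInterval, clamp (s : ℝ) = s := fun s =>
      Subtype.ext (hclval _ s.2.1 s.2.2)
    have hcl0 : clamp (0 : ℝ) = 0 := hclI 0
    -- left path family
    let Fl : C((C(unitInterval, B) × unitInterval) × unitInterval, B) :=
      ⟨fun x => x.1.1 (clamp ((x.1.2 : ℝ) - (x.2 : ℝ))),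
        ContinuousEval.continuous_eval.comp
          ((continuous_fst.fst).prodMk (hclc.comp
            ((continuous_subtype_val.comp continuous_fst.snd).sub
              (continuous_subtype_val.comp continuous_snd))))⟩
    let Fr : C((C(unitInterval, B) × unitInterval) × unitInterval, B) :=
      ⟨fun x => x.1.1 (clamp ((x.1.2 : ℝ) + (x.2 : ℝ))),
        ContinuousEval.continuous_eval.comp
          ((continuous_fst.fst).prodMk (hclc.comp
            ((continuous_subtype_val.comp continuous_fst.snd).add
              (continuous_subtype_val.comp continuous_snd))))⟩
    let βl : C(C(unitInterval, B) × unitInterval, C(unitInterval, B)) := Fl.curry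
    let βr : C(C(unitInterval, B) × unitInterval, C(unitInterval, B)) := Fr.curry
    have hβl0 : ∀ (α : C(unitInterval, B)) (s : unitInterval), βl (α, s) 0 = α s := by
      intro α s
      show α (clamp ((s : ℝ) - ((0 : unitInterval) : ℝ))) = α s
      rw [show ((0 : unitInterval) : ℝ) = 0 from rfl, sub_zero, hclI]
    have hβr0 : ∀ (α : C(unitInterval, B)) (s : unitInterval), βr (α, s) 0 = α s := by
      intro α s
      show α (clamp ((s : ℝ) + ((0 : unitInterval) : ℝ))) = α s
      rw [show ((0 : unitInterval) : ℝ) = 0 from rfl, add_zero, hclI]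
    let D := {q : E × C(unitInterval, B) × unitInterval // q.2.1 q.2.2 = p q.1}
    let L : D → C(unitInterval, E) := fun q =>
      lam ⟨(q.1.1, βl q.1.2), by rw [show βl q.1.2 = βl (q.1.2.1, q.1.2.2) from rfl, hβl0]; exact q.2⟩
    let R : D → C(unitInterval, E) := fun q =>
      lam ⟨(q.1.1, βr q.1.2), by rw [show βr q.1.2 = βr (q.1.2.1, q.1.2.2) from rfl, hβr0]; exact q.2⟩
    have hLc : Continuous L := hcont.comp (Continuous.subtype_mk
      ((continuous_subtype_val.fst).prodMk
        (βl.continuous.comp (continuous_subtype_val.snd))) _)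
    have hRc : Continuous R := hcont.comp (Continuous.subtype_mk
      ((continuous_subtype_val.fst).prodMk
        (βr.continuous.comp (continuous_subtype_val.snd))) _)
    -- value of L, R at 0 is the base point
    have hL0 : ∀ q : D, L q 0 = q.1.1 := fun q => h0 _
    have hR0 : ∀ q : D, R q 0 = q.1.1 := fun q => h0 _
    have hLp : ∀ (q : D) (u : unitInterval),
        p (L q u) = q.1.2.1 (clamp ((q.1.2.2 : ℝ) - (u : ℝ))) := fun q u => hpt _ u
    have hRp : ∀ (q : D) (u : unitInterval),
        p (R q u) = q.1.2.1 (clamp ((q.1.2.2 : ℝ) + (u : ℝ))) := fun q u => hpt _ u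
    -- the glued map
    let Φ : D × unitInterval → E := fun x =>
      if ((x.2 : ℝ)) ≤ ((x.1.1.2.2 : ℝ)) then L x.1 (clamp ((x.1.1.2.2 : ℝ) - (x.2 : ℝ)))
      else R x.1 (clamp ((x.2 : ℝ) - (x.1.1.2.2 : ℝ)))
    have hΦdef : ∀ (q : D) (t : unitInterval), Φ (q, t) =
        if ((t : ℝ)) ≤ ((q.1.2.2 : ℝ)) then L q (clamp ((q.1.2.2 : ℝ) - (t : ℝ)))
        else R q (clamp ((t : ℝ) - (q.1.2.2 : ℝ))) := fun _ _ => rfl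
    have hΦ : Continuous Φ := by
      refine Continuous.if_le ?_ ?_ ?_ ?_ ?_
      · exact ContinuousEval.continuous_eval.comp ((hLc.comp continuous_fst).prodMk
          (hclc.comp ((continuous_subtype_val.comp
            ((continuous_subtype_val.comp continuous_fst).snd.snd)).sub
            (continuous_subtype_val.comp continuous_snd))))
      · exact ContinuousEval.continuous_eval.comp ((hRc.comp continuous_fst).prodMk
          (hclc.comp ((continuous_subtype_val.comp continuous_snd).sub
            (continuous_subtype_val.comp
              ((continuous_subtype_val.comp continuous_fst).snd.snd)))))
      · exact continuous_subtype_val.comp continuous_snd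
      · exact continuous_subtype_val.comp
          ((continuous_subtype_val.comp continuous_fst).snd.snd)
      · intro x hx
        rw [hx, sub_self, hcl0, hL0, hR0]
    refine ⟨fun q => (ContinuousMap.mk Φ hΦ).curry q,
      (ContinuousMap.mk Φ hΦ).curry.continuous, ?_, ?_, ?_⟩
    · -- equivariance
      intro g q q' h1 h2 h3
      have hLe : L q' = g • L q := by
        refine hequiv g _ _ ?_
        show (q'.1.1, βl q'.1.2) = g • (q.1.1, βl q.1.2)
        refine Prod.ext h1 ?_
        show βl (q'.1.2.1, q'.1.2.2) = g • βl (q.1.2.1, q.1.2.2)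
        rw [h2, h3]
        ext u
        rfl
      have hRe : R q' = g • R q := by
        refine hequiv g _ _ ?_
        show (q'.1.1, βr q'.1.2) = g • (q.1.1, βr q.1.2)
        refine Prod.ext h1 ?_
        show βr (q'.1.2.1, q'.1.2.2) = g • βr (q.1.2.1, q.1.2.2)
        rw [h2, h3]
        ext u
        rfl
      ext t
      show Φ (q', t) = g • Φ (q, t)
      rw [hΦdef, hΦdef, h3, hLe, hRe]
      split <;> rfl
    · -- initial condition
      intro q
      show Φ (q, q.1.2.2) = q.1.1
      rw [hΦdef, if_pos le_rfl, sub_self, hcl0, hL0]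
    · -- lifting condition
      intro q t
      show p (Φ (q, t)) = q.1.2.1 t
      rw [hΦdef]
      rcases le_or_gt (t : ℝ) ((q.1.2.2 : ℝ)) with h | h
      · rw [if_pos h, hLp]
        have h1 : ((clamp ((q.1.2.2 : ℝ) - (t : ℝ)) : unitInterval) : ℝ)
            = (q.1.2.2 : ℝ) - (t : ℝ) :=
          hclval _ (sub_nonneg.2 h) (le_trans (sub_le_self _ t.2.1) q.1.2.2.2.2)
        rw [h1, sub_sub_cancel, hclI]
      · rw [if_neg (not_le.2 h), hRp]
        have h1 : ((clamp ((t : ℝ) - (q.1.2.2 : ℝ)) : unitInterval) : ℝ)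
            = (t : ℝ) - (q.1.2.2 : ℝ) :=
          hclval _ (sub_nonneg.2 h.le) (le_trans (sub_le_self _ q.1.2.2.2.1) t.2.2)
        rw [h1, add_sub_cancel, hclI]
  · rintro ⟨Lam, hc, he, h0, hpt⟩
    refine ⟨fun q => Lam ⟨(q.1.1, q.1.2, 0), q.2⟩,
      hc.comp (Continuous.subtype_mk ((continuous_subtype_val.fst).prodMk
        ((continuous_subtype_val.snd).prodMk continuous_const)) _),
      ?_, fun q => h0 _, fun q t => hpt _ t⟩
    intro g q q' h
    exact he g _ _ (congrArg Prod.fst h) (congrArg (fun x => x.2) h) rfl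
end

section
/- Let G be a compact Hausdorff topological group acting continuously on topological spaces E and B, and let p : E → B be a continuous equivariant map which is a weakly locally trivial G-fibration. Then p is a local Hurewicz G-fibration, i.e., every point b ∈ B has an open G-invariant neighborhood U such that the restriction p : p⁻¹(U) → U is a Hurewicz G-fibration. -/
open unitInterval Pointwise

/-- `p : E → B` is a Hurewicz `G`-fibration (with the given actions `actE`, `actB` of `G`
on `E` and `B`). -/
def IsHurewiczGFibration.{uX, uG, uE, uB} (G : Type uG) [Group G] [TopologicalSpace G]
    {E : Type uE} {B : Type uB} [TopologicalSpace E] [TopologicalSpace B]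
    (actE : G → E → E) (actB : G → B → B) (p : E → B) : Prop :=
  ∀ (X : Type uX) [TopologicalSpace X] [MulAction G X] [ContinuousSMul G X],
    ∀ (f : X → E) (F : X × unitInterval → B),
      Continuous f → Continuous F →
      (∀ (g : G) (x : X), f (g • x) = actE g (f x)) →
      (∀ (g : G) (x : X) (t : unitInterval), F (g • x, t) = actB g (F (x, t))) →
      (∀ x : X, F (x, 0) = p (f x)) →
      ∃ Ft : X × unitInterval → E, Continuous Ft ∧
        (∀ (g : G) (x : X) (t : unitInterval), Ft (g • x, t) = actE g (Ft (x, t))) ∧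
        (∀ z : X × unitInterval, p (Ft z) = F z) ∧
        (∀ x : X, Ft (x, 0) = f x)

/-- For a `G`-invariant set `U ⊆ B` and an equivariant map `p : E → B`, this says that the
restriction `p : p⁻¹(U) → U` (with the restricted `G`-actions) is a Hurewicz
`G`-fibration. -/
def IsRestrictedHurewiczGFibration.{uX, uG, uE, uB} (G : Type uG) [Group G] [TopologicalSpace G]
    {E : Type uE} {B : Type uB} [TopologicalSpace E] [TopologicalSpace B]
    [MulAction G E] [MulAction G B]
    (p : E → B) (hpe : ∀ (g : G) (e : E), p (g • e) = g • p e)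
    (U : Set B) (hinv : ∀ g : G, g • U = U) : Prop :=
  IsHurewiczGFibration.{uX} G
    (fun (g : G) (e : p ⁻¹' U) => (⟨g • e.1, by
      have he : g • p e.1 ∈ g • U := Set.smul_mem_smul_set e.2
      rw [hinv g] at he
      rwa [Set.mem_preimage, hpe]⟩ : p ⁻¹' U))
    (fun (g : G) (b : U) => (⟨g • b.1, by
      have hb : g • b.1 ∈ g • U := Set.smul_mem_smul_set b.2
      rwa [hinv g] at hb⟩ : U))
    (fun e : p ⁻¹' U => (⟨p e.1, e.2⟩ : U))

/-- `p : E → B` is a weakly locally trivial `G`-fibration: every point of `B` has an open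
`G`-invariant neighborhood `U` and a continuous `G`-equivariant map
`ω : U × p⁻¹(U) → p⁻¹(U)` (with the diagonal `G`-action on `U × p⁻¹(U)`) such that
`p (ω (b, e)) = b` and `ω (p e, e) = e`. -/
def IsWeaklyLocallyTrivialGFibration (G : Type*) [Group G] [TopologicalSpace G]
    {E B : Type*} [TopologicalSpace E] [TopologicalSpace B]
    [MulAction G E] [MulAction G B]
    (p : E → B) (hpe : ∀ (g : G) (e : E), p (g • e) = g • p e) : Prop :=
  ∀ b : B, ∃ U : Set B, IsOpen U ∧ b ∈ U ∧ ∃ hinv : ∀ g : G, g • U = U,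
    ∃ ω : ↥U × ↥(p ⁻¹' U) → ↥(p ⁻¹' U), Continuous ω ∧
      (∀ (g : G) (z : ↥U × ↥(p ⁻¹' U)),
        ((ω (⟨g • z.1.1, by
            have hz : g • (z.1.1 : B) ∈ g • U := Set.smul_mem_smul_set z.1.2
            rwa [hinv g] at hz⟩,
          ⟨g • z.2.1, by
            have hz : g • p (z.2.1 : E) ∈ g • U := Set.smul_mem_smul_set z.2.2
            rw [hinv g] at hz
            rwa [Set.mem_preimage, hpe]⟩)).1 : E) = g • ((ω z).1 : E)) ∧
      (∀ z : ↥U × ↥(p ⁻¹' U), p ((ω z).1 : E) = (z.1.1 : B)) ∧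
      (∀ e : ↥(p ⁻¹' U), ω (⟨p e.1, e.2⟩, e) = e)

/-- For a compact Hausdorff group `G`, every weakly locally trivial `G`-fibration is a
local Hurewicz `G`-fibration: every point of `B` has an open `G`-invariant neighborhood `U`
such that the restriction `p : p⁻¹(U) → U` is a Hurewicz `G`-fibration. -/
theorem local_isHurewiczGFibration_of_weaklyLocallyTrivial
    (G : Type*) [Group G] [TopologicalSpace G] [IsTopologicalGroup G]
    [CompactSpace G] [T2Space G]
    {E B : Type*} [TopologicalSpace E] [TopologicalSpace B]
    [MulAction G E] [MulAction G B] [ContinuousSMul G E] [ContinuousSMul G B]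
    (p : E → B) (hp : Continuous p)
    (hpe : ∀ (g : G) (e : E), p (g • e) = g • p e)
    (hwlt : IsWeaklyLocallyTrivialGFibration G p hpe) :
    ∀ b : B, ∃ U : Set B, IsOpen U ∧ b ∈ U ∧ ∃ hinv : ∀ g : G, g • U = U,
      IsRestrictedHurewiczGFibration G p hpe U hinv := by
  intro b
  obtain ⟨U, hU, hbU, hinv, ω, hωc, hωeq, hωp, hωid⟩ := hwlt b
  refine ⟨U, hU, hbU, hinv, ?_⟩
  intro X _ _ _ f F hf hF hfe hFe hF0
  refine ⟨fun z => ω (F z, f z.1), hωc.comp (hF.prodMk (hf.comp continuous_fst)),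
    ?_, ?_, ?_⟩
  · intro g x t
    apply Subtype.ext
    show ((ω (F (g • x, t), f (g • x))).1 : E) = g • ((ω (F (x, t), f x)).1 : E)
    rw [hFe g x t, hfe g x]
    exact hωeq g (F (x, t), f x)
  · intro z
    apply Subtype.ext
    exact hωp (F z, f z.1)
  · intro x
    show ω (F (x, 0), f x) = f x
    rw [hF0 x]
    exact hωid (f x)
end

section
/- Let G be a compact Hausdorff topological group acting continuously on topological spaces E and B, where B is paracompact Hausdorff, and let p : E → B be a continuous equivariant map which is a weakly locally trivial G-fibration. Then p is a Hurewicz G-fibration. -/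
open unitInterval Pointwise

open Set Filter Topology Pointwise

section Utils

variable {X Y B : Type*} [TopologicalSpace X] [TopologicalSpace Y] [TopologicalSpace B]

theorem isOpen_forall_mem {K : Set Y} (hK : IsCompact K) {F : X × Y → B} (hF : Continuous F)
    {U : Set B} (hU : IsOpen U) : IsOpen {x : X | ∀ t ∈ K, F (x, t) ∈ U} := by
  rw [isOpen_iff_mem_nhds]
  intro x hx
  exact hK.eventually_forall_of_forall_eventually (x₀ := x) (P := fun x t => F (x, t) ∈ U)
    (fun y hy => hF.continuousAt.preimage_mem_nhds (hU.mem_nhds (hx y hy)))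

theorem continuous_sInf_image_Icc {g : X × ℝ → ℝ} (hg : Continuous g) {α β : ℝ} (hαβ : α ≤ β) :
    Continuous fun x => sInf ((fun t => g (x, t)) '' Icc α β) := by
  have hne : ∀ x : X, ((fun t => g (x, t)) '' Icc α β).Nonempty :=
    fun x => (nonempty_Icc.2 hαβ).image _
  have hbdd : ∀ x : X, BddBelow ((fun t => g (x, t)) '' Icc α β) := fun x =>
    (isCompact_Icc.image (hg.comp (Continuous.prodMk_right x))).bddBelow
  rw [continuous_iff_continuousAt]
  intro x₀
  rw [ContinuousAt, tendsto_order]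
  constructor
  · intro a ha
    set a' := (a + sInf ((fun t => g (x₀, t)) '' Icc α β)) / 2 with ha'
    have h1 : a < a' := by simp only [ha']; linarith
    have h2 : a' < sInf ((fun t => g (x₀, t)) '' Icc α β) := by simp only [ha']; linarith
    have : ∀ᶠ x in 𝓝 x₀, ∀ t ∈ Icc α β, a' < g (x, t) := by
      apply isCompact_Icc.eventually_forall_of_forall_eventually (x₀ := x₀)
        (P := fun x t => a' < g (x, t))
      intro t ht
      have : a' < g (x₀, t) := lt_of_lt_of_le h2 (csInf_le (hbdd x₀) ⟨t, ht, rfl⟩)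
      exact ContinuousAt.eventually_lt continuousAt_const (hg.continuousAt (x := (x₀, t))) this
    refine this.mono fun x hx => lt_of_lt_of_le h1 ?_
    exact le_csInf (hne x) (by rintro v ⟨t, ht, rfl⟩; exact (hx t ht).le)
  · intro b hb
    obtain ⟨v, ⟨t, ht, rfl⟩, hvb⟩ := exists_lt_of_csInf_lt (hne x₀) hb
    have : ∀ᶠ x in 𝓝 x₀, g (x, t) < b :=
      ((hg.comp (continuous_id.prodMk continuous_const)).continuousAt (x := x₀)).eventually_lt
        continuousAt_const hvb
    exact this.mono fun x hx => lt_of_le_of_lt (csInf_le (hbdd x) ⟨t, ht, rfl⟩) hx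

theorem sInf_image_Icc_le {h : ℝ → ℝ} {α β t : ℝ} (hh : ContinuousOn h (Icc α β))
    (ht : t ∈ Icc α β) : sInf (h '' Icc α β) ≤ h t :=
  csInf_le (isCompact_Icc.image_of_continuousOn hh).bddBelow ⟨t, ht, rfl⟩

theorem lt_sInf_image_Icc {h : ℝ → ℝ} {α β : ℝ} (hh : ContinuousOn h (Icc α β)) (hαβ : α ≤ β)
    (hp : ∀ t ∈ Icc α β, 0 < h t) : 0 < sInf (h '' Icc α β) := by
  obtain ⟨t₀, ht₀, hmin⟩ := isCompact_Icc.exists_isMinOn (nonempty_Icc.2 hαβ) hh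
  refine lt_of_lt_of_le (hp t₀ ht₀) (le_csInf ((nonempty_Icc.2 hαβ).image _) ?_)
  rintro v ⟨t, ht, rfl⟩
  exact hmin ht

theorem le_sInf_image_Icc {h : ℝ → ℝ} {α β : ℝ} (hαβ : α ≤ β) {v : ℝ}
    (hv : ∀ t ∈ Icc α β, v ≤ h t) : v ≤ sInf (h '' Icc α β) :=
  le_csInf ((nonempty_Icc.2 hαβ).image _) (by rintro w ⟨t, ht, rfl⟩; exact hv t ht)

theorem Set.Finite.listsLE {ι : Type*} {T : Set ι} (hT : T.Finite) (M : ℕ) :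
    {l : List ι | l.length ≤ M ∧ ∀ i ∈ l, i ∈ T}.Finite := by
  induction M with
  | zero =>
    refine Set.Finite.subset (finite_singleton ([] : List ι)) ?_
    rintro l ⟨hl, -⟩
    simp [List.length_eq_zero_iff.1 (Nat.le_zero.1 hl)]
  | succ M ih =>
    refine Set.Finite.subset (Set.Finite.union (finite_singleton ([] : List ι))
      (Set.Finite.image (fun z : ι × List ι => z.1 :: z.2) (hT.prod ih))) ?_
    rintro l ⟨hl, hmem⟩
    match l with
    | [] => exact Or.inl rfl
    | i :: l' =>
      refine Or.inr ⟨(i, l'), ⟨hmem i (by simp), ?_, ?_⟩, rfl⟩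
      · simpa using Nat.succ_le_succ_iff.1 hl
      · exact fun j hj => hmem j (by simp [hj])

theorem LocallyFinite.exists_isOpen_superset {ι B : Type*} [TopologicalSpace B]
    {f : ι → Set B} (hf : LocallyFinite f) {K : Set B} (hK : IsCompact K) :
    ∃ O, IsOpen O ∧ K ⊆ O ∧ {i | (f i ∩ O).Nonempty}.Finite := by
  choose t ht hfin using hf
  have hKsub : K ⊆ ⋃ k ∈ K, interior (t k) :=
    fun k hk => mem_biUnion hk (mem_interior_iff_mem_nhds.2 (ht k))
  obtain ⟨s, hssub, hs, hcov⟩ := hK.elim_finite_subcover_image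
    (fun k _ => isOpen_interior) hKsub
  refine ⟨⋃ k ∈ s, interior (t k), isOpen_biUnion fun k _ => isOpen_interior, hcov, ?_⟩
  refine Set.Finite.subset (Set.Finite.biUnion hs fun k _ => hfin k) ?_
  rintro i ⟨x, hxi, hxO⟩
  simp only [mem_iUnion] at hxO ⊢
  obtain ⟨k, hk, hxk⟩ := hxO
  exact ⟨k, hk, ⟨x, hxi, interior_subset hxk⟩⟩

end Utils

section Construction

/-- A bundle of all the data needed for the equivariant Hurewicz lifting construction. -/
structure LiftPack (G : Type*) [Group G] (E B X ι : Type*) [TopologicalSpace E]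
    [TopologicalSpace B] [TopologicalSpace X] [MulAction G E] [MulAction G B]
    [MulAction G X] : Type _ where
  p : E → B
  U : ι → Set B
  Om : ι → B × E → E
  φ : ι → B → ℝ
  f : X → E
  Fr : X → ℝ → B
  hpC : Continuous p
  hUo : ∀ i, IsOpen (U i)
  hOmC : ∀ i, ContinuousOn (Om i) {z : B × E | z.1 ∈ U i ∧ p z.2 ∈ U i}
  hOmP : ∀ i, ∀ z : B × E, z.1 ∈ U i → p z.2 ∈ U i → p (Om i z) = z.1
  hOmD : ∀ (i) (e : E), Om i (p e, e) = e
  hOmE : ∀ (i) (g : G) (z : B × E), Om i (g • z.1, g • z.2) = g • Om i z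
  hφC : ∀ i, Continuous (φ i)
  hφ0 : ∀ i b, 0 ≤ φ i b
  hφ1 : ∀ i b, φ i b ≤ 1
  hφE : ∀ (i) (g : G) (b), φ i (g • b) = φ i b
  hφU : ∀ i, closure {b | φ i b ≠ 0} ⊆ U i
  hφLF : LocallyFinite fun i => {b | φ i b ≠ 0}
  hφpos : ∀ b, ∃ i, 0 < φ i b
  hFrC : Continuous fun z : X × ℝ => Fr z.1 z.2
  hfC : Continuous f
  hpf : ∀ x, p (f x) = Fr x 0
  hFrE : ∀ (g : G) (x) (t), Fr (g • x) t = g • Fr x t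
  hfE : ∀ (g : G) (x), f (g • x) = g • f x

variable {G E B X ι : Type*} [Group G] [TopologicalSpace E] [TopologicalSpace B]
  [TopologicalSpace X] [MulAction G E] [MulAction G B] [MulAction G X] [Nonempty ι]

namespace LiftPack

variable (P : LiftPack G E B X ι)

/-- grid point `j/n`. -/
noncomputable def grid (n j : ℕ) : ℝ := (j : ℝ) / (n : ℝ)

theorem grid_nonneg (n j : ℕ) : 0 ≤ grid n j := by
  unfold grid; positivity

theorem grid_mono {n : ℕ} (hn : 0 < n) {j k : ℕ} (hjk : j ≤ k) : grid n j ≤ grid n k := by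
  unfold grid
  rcases hjk.lt_or_eq with h | h
  · apply (div_le_div_iff_of_pos_right (by exact_mod_cast hn : (0:ℝ) < n)).2
    exact_mod_cast hjk
  · rw [h]

theorem grid_zero (n : ℕ) : grid n 0 = 0 := by simp [grid]

theorem grid_self {n : ℕ} (hn : 0 < n) : grid n n = 1 := by
  unfold grid
  rw [div_self]
  exact_mod_cast hn.ne'

theorem grid_le_one {n j : ℕ} (hn : 0 < n) (hj : j ≤ n) : grid n j ≤ 1 := by
  rw [← grid_self hn]; exact grid_mono hn hj

/-- the infimum of `φ i` along the part of the path of `x` over `[a, b]`. -/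
noncomputable def dip (i : ι) (a b : ℝ) (x : X) : ℝ :=
  sInf ((fun t => P.φ i (P.Fr x t)) '' Icc a b)

theorem dip_cont (i : ι) {a b : ℝ} (hab : a ≤ b) : Continuous (P.dip i a b) :=
  continuous_sInf_image_Icc ((P.hφC i).comp P.hFrC) hab

theorem dip_contOn (i : ι) (x : X) {a b : ℝ} :
    ContinuousOn (fun t => P.φ i (P.Fr x t)) (Icc a b) :=
  (((P.hφC i).comp (P.hFrC.comp (Continuous.prodMk_right x)))).continuousOn

theorem dip_nonneg (i : ι) {a b : ℝ} (hab : a ≤ b) (x : X) : 0 ≤ P.dip i a b x :=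
  le_sInf_image_Icc hab fun t _ => P.hφ0 i _

theorem dip_le (i : ι) {a b t : ℝ} {x : X} (ht : t ∈ Icc a b) :
    P.dip i a b x ≤ P.φ i (P.Fr x t) :=
  sInf_image_Icc_le (P.dip_contOn i x) ht

theorem dip_le_one (i : ι) {a b : ℝ} (hab : a ≤ b) (x : X) : P.dip i a b x ≤ 1 :=
  le_trans (P.dip_le _ (left_mem_Icc.2 hab)) (P.hφ1 i _)

theorem dip_pos (i : ι) {a b : ℝ} (hab : a ≤ b) {x : X}
    (h : ∀ t ∈ Icc a b, 0 < P.φ i (P.Fr x t)) : 0 < P.dip i a b x :=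
  lt_sInf_image_Icc (P.dip_contOn i x) hab h

theorem dip_inv (i : ι) (a b : ℝ) (g : G) (x : X) : P.dip i a b (g • x) = P.dip i a b x := by
  unfold dip
  congr 1
  ext v
  constructor
  · rintro ⟨t, ht, rfl⟩; exact ⟨t, ht, by simp only [P.hFrE, P.hφE]⟩
  · rintro ⟨t, ht, rfl⟩; exact ⟨t, ht, by simp only [P.hFrE, P.hφE]⟩

/-- the default index. -/
noncomputable def dflt : ι := Classical.arbitrary ι

/-- the basic "sequence" functions: product over the grid subdivision. -/
noncomputable def rho (c : List ι) (x : X) : ℝ :=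
  if c.length = 0 then 0
  else ∏ j ∈ Finset.range c.length,
    P.dip (c.getD j (dflt (ι := ι))) (grid c.length j) (grid c.length (j + 1)) x

theorem rho_nil (x : X) : P.rho [] x = 0 := by simp [rho]

theorem rho_cont (c : List ι) : Continuous (P.rho c) := by
  unfold rho
  split
  · exact continuous_const
  · next hc =>
    exact continuous_finset_prod _ fun j _ =>
      P.dip_cont _ (grid_mono (Nat.pos_of_ne_zero hc) (Nat.le_succ j))

theorem rho_nonneg (c : List ι) (x : X) : 0 ≤ P.rho c x := by
  unfold rho
  split
  · exact le_refl 0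
  · next hc =>
    exact Finset.prod_nonneg fun j _ =>
      P.dip_nonneg _ (grid_mono (Nat.pos_of_ne_zero hc) (Nat.le_succ j)) x

theorem rho_le_one (c : List ι) (x : X) : P.rho c x ≤ 1 := by
  unfold rho
  split
  · exact zero_le_one
  · next hc =>
    exact Finset.prod_le_one
      (fun j _ => P.dip_nonneg _ (grid_mono (Nat.pos_of_ne_zero hc) (Nat.le_succ j)) x)
      (fun j _ => P.dip_le_one _ (grid_mono (Nat.pos_of_ne_zero hc) (Nat.le_succ j)) x)

theorem rho_inv (c : List ι) (g : G) (x : X) : P.rho c (g • x) = P.rho c x := by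
  unfold rho
  split
  · rfl
  · exact Finset.prod_congr rfl fun j _ => P.dip_inv _ _ _ g x

/-- the "good set" of a sequence. -/
def Ac (c : List ι) : Set X :=
  {x | ∀ j < c.length, ∀ t ∈ Icc (grid c.length j) (grid c.length (j + 1)),
    P.Fr x t ∈ P.U (c.getD j (dflt (ι := ι)))}

theorem isOpen_Ac (c : List ι) : IsOpen (P.Ac c) := by
  have : P.Ac c = ⋂ j ∈ Finset.range c.length,
      {x | ∀ t ∈ Icc (grid c.length j) (grid c.length (j + 1)),
        P.Fr x t ∈ P.U (c.getD j (dflt (ι := ι)))} := by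
    ext x
    simp only [Ac, mem_setOf_eq, mem_iInter, Finset.mem_range]
  rw [this]
  exact isOpen_biInter_finset fun j _ =>
    isOpen_forall_mem isCompact_Icc P.hFrC (P.hUo _)

theorem dip_pos_of_rho {c : List ι} {x : X} (hx : P.rho c x ≠ 0) {j : ℕ} (hj : j < c.length) :
    0 < P.dip (c.getD j (dflt (ι := ι))) (grid c.length j) (grid c.length (j + 1)) x := by
  have hn : c.length ≠ 0 := by rintro h; exact hx (by simp [rho, h])
  unfold rho at hx
  rw [if_neg hn] at hx
  rcases lt_or_ge 0 (P.dip (c.getD j (dflt (ι := ι)))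
      (grid c.length j) (grid c.length (j+1)) x) with h | h
  · exact h
  · exfalso
    apply hx
    have h0 : P.dip (c.getD j (dflt (ι := ι))) (grid c.length j) (grid c.length (j+1)) x = 0 :=
      le_antisymm h (P.dip_nonneg _ (grid_mono (Nat.pos_of_ne_zero hn) (Nat.le_succ j)) x)
    exact Finset.prod_eq_zero (Finset.mem_range.2 hj) h0

theorem mem_Ac_of_rho {c : List ι} {x : X} (hx : P.rho c x ≠ 0) : x ∈ P.Ac c := by
  intro j hj t ht
  have h1 := P.dip_pos_of_rho hx hj
  have h2 : 0 < P.φ (c.getD j (dflt (ι := ι))) (P.Fr x t) := lt_of_lt_of_le h1 (P.dip_le _ ht)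
  exact P.hφU _ (subset_closure h2.ne')

theorem closure_rho_subset_Ac (c : List ι) : closure {x | P.rho c x ≠ 0} ⊆ P.Ac c := by
  intro x₀ hx₀ j hj t ht
  have h1 : (fun x => P.Fr x t) '' {x | P.rho c x ≠ 0} ⊆
      {b | P.φ (c.getD j (dflt (ι := ι))) b ≠ 0} := by
    rintro b ⟨x, hx, rfl⟩
    exact (lt_of_lt_of_le (P.dip_pos_of_rho hx hj) (P.dip_le _ ht)).ne'
  have h2 : P.Fr x₀ t ∈ closure ((fun x => P.Fr x t) '' {x | P.rho c x ≠ 0}) := by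
    apply image_closure_subset_closure_image
      (P.hFrC.comp (continuous_id.prodMk continuous_const))
    exact ⟨x₀, hx₀, rfl⟩
  exact P.hφU _ (closure_mono h1 h2)

/-- existence of a positive `rho` at every point (Lebesgue number argument). -/
theorem exists_rho_pos (x : X) : ∃ c : List ι, c.length ≠ 0 ∧ 0 < P.rho c x := by
  -- open cover of [0,1] by the sets where some φ i is positive along the path
  have hcov : Icc (0:ℝ) 1 ⊆ ⋃ i : ι, {t : ℝ | 0 < P.φ i (P.Fr x t)} := by
    intro t _
    obtain ⟨i, hi⟩ := P.hφpos (P.Fr x t)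
    exact mem_iUnion.2 ⟨i, hi⟩
  obtain ⟨δ, hδ, hball⟩ := lebesgue_number_lemma_of_metric isCompact_Icc
    (fun i => (isOpen_lt continuous_const ((P.hφC i).comp
      (P.hFrC.comp (continuous_const.prodMk continuous_id))))) hcov
  obtain ⟨n, hn⟩ := exists_nat_one_div_lt hδ
  set m := n + 1 with hm
  have hmpos : 0 < m := Nat.succ_pos n
  have hsub : ∀ j : ℕ, j < m → ∃ i : ι, ∀ t ∈ Icc (grid m j) (grid m (j + 1)),
      0 < P.φ i (P.Fr x t) := by
    intro j hj
    obtain ⟨i, hi⟩ := hball (grid m j) ⟨grid_nonneg m j, grid_le_one hmpos hj.le⟩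
    refine ⟨i, fun t ht => ?_⟩
    apply hi
    rw [Metric.mem_ball, Real.dist_eq, abs_sub_lt_iff]
    have h1 : grid m (j+1) - grid m j = 1 / m := by
      unfold grid; push_cast; field_simp; ring
    constructor
    · have := ht.2
      have h2 : (1:ℝ)/m < δ := by
        calc (1:ℝ)/m ≤ 1/(n+1) := by
              apply div_le_div_of_nonneg_left zero_le_one
              · positivity
              · exact_mod_cast le_refl m
        _ < δ := hn
      linarith [ht.2, h1 ▸ (by linarith : t - grid m j ≤ grid m (j+1) - grid m j)]
    · linarith [ht.1, hδ]
  choose idx hidx using hsub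
  -- build the list
  refine ⟨List.ofFn (fun j : Fin m => idx j j.2), by simp, ?_⟩
  have hlen : (List.ofFn (fun j : Fin m => idx j j.2)).length = m := by simp [hm]
  unfold rho
  rw [if_neg (by rw [hlen]; exact hmpos.ne')]
  apply Finset.prod_pos
  intro j hj
  rw [Finset.mem_range, hlen] at hj
  have hget : (List.ofFn (fun j : Fin m => idx j j.2)).getD j (dflt (ι := ι)) = idx j hj := by
    rw [List.getD_eq_getElem _ _ (by rw [hlen]; exact hj), List.getElem_ofFn]
  rw [hlen, hget]
  exact P.dip_pos _ (grid_mono hmpos (Nat.le_succ j)) (hidx j hj)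


/-! ### The auxiliary partition-of-unity machinery on `X` -/

theorem exists_tube (x₀ : X) : ∃ N : Set X, IsOpen N ∧ x₀ ∈ N ∧ ∃ T : Set ι, T.Finite ∧
    ∀ x ∈ N, ∀ i : ι, (∃ t ∈ Icc (0:ℝ) 1, P.φ i (P.Fr x t) ≠ 0) → i ∈ T := by
  have hK : IsCompact ((fun t => P.Fr x₀ t) '' Icc 0 1) :=
    isCompact_Icc.image (P.hFrC.comp (Continuous.prodMk_right x₀))
  obtain ⟨O, hOo, hKO, hfin⟩ := P.hφLF.exists_isOpen_superset hK
  refine ⟨{x : X | ∀ t ∈ Icc (0:ℝ) 1, (fun z : X × ℝ => P.Fr z.1 z.2) (x, t) ∈ O},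
    isOpen_forall_mem isCompact_Icc P.hFrC hOo, ?_, _, hfin, ?_⟩
  · intro t ht
    exact hKO ⟨t, ht, rfl⟩
  · rintro x hx i ⟨t, ht, hφ⟩
    exact ⟨P.Fr x t, hφ, hx t ht⟩

theorem entries_mem {c : List ι} {x : X} (hρ : P.rho c x ≠ 0) {i : ι} (hi : i ∈ c) :
    ∃ t ∈ Icc (0:ℝ) 1, P.φ i (P.Fr x t) ≠ 0 := by
  obtain ⟨j, hj, rfl⟩ := List.mem_iff_getElem.1 hi
  have hn : 0 < c.length := lt_of_le_of_lt (Nat.zero_le j) hj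
  have h1 := P.dip_pos_of_rho hρ hj
  have h2 : grid c.length j ∈ Icc (grid c.length j) (grid c.length (j + 1)) :=
    left_mem_Icc.2 (grid_mono hn (Nat.le_succ j))
  refine ⟨grid c.length j, ⟨grid_nonneg _ _, grid_le_one hn hj.le⟩, ?_⟩
  have h3 := lt_of_lt_of_le h1 (P.dip_le _ h2)
  rw [List.getD_eq_getElem _ _ hj] at h3
  exact h3.ne'
  
theorem finite_rho_support (x : X) (m : ℕ) :
    {c : List ι | c.length ≤ m ∧ P.rho c x ≠ 0}.Finite := by
  obtain ⟨N, -, hxN, T, hT, hTc⟩ := P.exists_tube x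
  refine Set.Finite.subset (hT.listsLE m) ?_
  rintro c ⟨hlen, hρ⟩
  exact ⟨hlen, fun i hi => hTc x hxN i (P.entries_mem hρ hi)⟩

noncomputable def sigLen (m : ℕ) (x : X) : ℝ :=
  ∑' c : List ι, if c.length ≤ m then P.rho c x else 0

noncomputable def psi (c : List ι) (x : X) : ℝ :=
  max 0 (P.rho c x - c.length * P.sigLen (c.length - 1) x)

noncomputable def sigT (x : X) : ℝ := ∑' c : List ι, P.psi c x

noncomputable def lam (c : List ι) (x : X) : ℝ := P.psi c x / P.sigT x

theorem summable_sigLen (m : ℕ) (x : X) :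
    Summable (fun c : List ι => if c.length ≤ m then P.rho c x else 0) := by
  apply summable_of_ne_finset_zero (s := (P.finite_rho_support x m).toFinset)
  intro c hc
  rw [Set.Finite.mem_toFinset] at hc
  by_cases h : c.length ≤ m
  · rw [if_pos h]
    by_contra hρ
    exact hc ⟨h, hρ⟩
  · exact if_neg h

theorem sigLen_nonneg (m : ℕ) (x : X) : 0 ≤ P.sigLen m x :=
  tsum_nonneg fun c => by
    by_cases h : c.length ≤ m
    · rw [if_pos h]; exact P.rho_nonneg c x
    · rw [if_neg h]

theorem le_sigLen {c : List ι} {m : ℕ} (hm : c.length ≤ m) (x : X) :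
    P.rho c x ≤ P.sigLen m x := by
  have := Summable.le_tsum (P.summable_sigLen m x) c (fun d _ => by
    by_cases h : d.length ≤ m
    · rw [if_pos h]; exact P.rho_nonneg d x
    · rw [if_neg h])
  rwa [if_pos hm] at this

theorem sigLen_inv (m : ℕ) (g : G) (x : X) : P.sigLen m (g • x) = P.sigLen m x :=
  tsum_congr fun c => by rw [P.rho_inv c g x]

theorem psi_nonneg (c : List ι) (x : X) : 0 ≤ P.psi c x := le_max_left _ _

theorem psi_nil (x : X) : P.psi [] x = 0 := by
  simp [psi, P.rho_nil]

theorem psi_inv (c : List ι) (g : G) (x : X) : P.psi c (g • x) = P.psi c x := by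
  unfold psi
  rw [P.rho_inv, P.sigLen_inv]

theorem rho_pos_of_psi {c : List ι} {x : X} (h : P.psi c x ≠ 0) : 0 < P.rho c x := by
  have h1 : 0 < P.psi c x := lt_of_le_of_ne (P.psi_nonneg c x) (Ne.symm h)
  have h2 : 0 < P.rho c x - c.length * P.sigLen (c.length - 1) x := by
    by_contra h3
    push_neg at h3
    rw [psi, max_eq_left h3] at h1
    exact lt_irrefl 0 h1
  have h4 : (0:ℝ) ≤ (c.length : ℝ) * P.sigLen (c.length - 1) x :=
    mul_nonneg (Nat.cast_nonneg _) (P.sigLen_nonneg _ x)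
  linarith

theorem exists_min (x : X) : ∃ c₀ : List ι, c₀.length ≠ 0 ∧ 0 < P.rho c₀ x ∧
    P.sigLen (c₀.length - 1) x = 0 ∧ 0 < P.psi c₀ x := by
  obtain ⟨c, hc0, hcpos⟩ := P.exists_rho_pos x
  have hS : ∃ n : ℕ, ∃ c : List ι, c.length = n ∧ P.rho c x ≠ 0 := ⟨c.length, c, rfl, hcpos.ne'⟩
  classical
  obtain ⟨c₀, hc₀len, hc₀⟩ := Nat.find_spec hS
  have hmin := fun n (hn : n < Nat.find hS) => Nat.find_min hS hn
  have hc₀pos : 0 < P.rho c₀ x := lt_of_le_of_ne (P.rho_nonneg c₀ x) (Ne.symm hc₀)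
  have hc₀ne : c₀.length ≠ 0 := by
    intro h
    rw [List.length_eq_zero_iff.1 h, P.rho_nil] at hc₀
    exact hc₀ rfl
  have hsig : P.sigLen (c₀.length - 1) x = 0 := by
    unfold sigLen
    convert tsum_zero with d
    by_cases h : d.length ≤ c₀.length - 1
    · rw [if_pos h]
      by_contra hd
      have : d.length < Nat.find hS := by
        rw [← hc₀len]
        omega
      exact hmin d.length this ⟨d, rfl, hd⟩
    · exact if_neg h
  refine ⟨c₀, hc₀ne, hc₀pos, hsig, ?_⟩
  unfold psi
  rw [hsig]
  simp only [mul_zero, sub_zero]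
  exact lt_max_of_lt_right hc₀pos

theorem psi_support_finite (x : X) : {c : List ι | P.psi c x ≠ 0}.Finite := by
  obtain ⟨c₀, hc₀ne, hc₀pos, hsig, hpsi⟩ := P.exists_min x
  set M := max c₀.length ⌈(1 : ℝ) / P.rho c₀ x⌉₊ with hM
  refine Set.Finite.subset (P.finite_rho_support x M) ?_
  intro c hc
  refine ⟨?_, (P.rho_pos_of_psi hc).ne'⟩
  by_contra hlen
  push_neg at hlen
  apply hc
  have h1 : c₀.length ≤ c.length - 1 := by
    have := le_max_left c₀.length ⌈(1 : ℝ) / P.rho c₀ x⌉₊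
    omega
  have h2 : P.rho c₀ x ≤ P.sigLen (c.length - 1) x := P.le_sigLen h1 x
  have h3 : (1 : ℝ) / P.rho c₀ x < c.length := by
    have := le_max_right c₀.length ⌈(1 : ℝ) / P.rho c₀ x⌉₊
    calc (1 : ℝ) / P.rho c₀ x ≤ ⌈(1 : ℝ) / P.rho c₀ x⌉₊ := Nat.le_ceil _
      _ ≤ (M : ℝ) := by exact_mod_cast this
      _ < c.length := by exact_mod_cast hlen
  have h4 : 1 < (c.length : ℝ) * P.rho c₀ x := by
    rw [div_lt_iff₀ hc₀pos] at h3
    linarith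
  have h5 : P.rho c x - c.length * P.sigLen (c.length - 1) x < 0 := by
    have h6 : (c.length : ℝ) * P.rho c₀ x ≤ c.length * P.sigLen (c.length - 1) x := by
      apply mul_le_mul_of_nonneg_left h2 (Nat.cast_nonneg _)
    have h7 := P.rho_le_one c x
    linarith
  unfold psi
  rw [max_eq_left h5.le]

theorem summable_psi (x : X) : Summable (fun c : List ι => P.psi c x) :=
  summable_of_ne_finset_zero (s := (P.psi_support_finite x).toFinset)
    (fun c hc => by
      by_contra h
      exact hc ((P.psi_support_finite x).mem_toFinset.2 h))

theorem sigT_pos (x : X) : 0 < P.sigT x := by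
  obtain ⟨c₀, -, -, -, hpsi⟩ := P.exists_min x
  exact lt_of_lt_of_le hpsi (Summable.le_tsum (P.summable_psi x) c₀ fun d _ => P.psi_nonneg d x)

theorem sigT_inv (g : G) (x : X) : P.sigT (g • x) = P.sigT x :=
  tsum_congr fun c => P.psi_inv c g x

theorem lam_nonneg (c : List ι) (x : X) : 0 ≤ P.lam c x :=
  div_nonneg (P.psi_nonneg c x) (P.sigT_pos x).le

theorem lam_nil (x : X) : P.lam [] x = 0 := by
  simp [lam, P.psi_nil]

theorem lam_inv (c : List ι) (g : G) (x : X) : P.lam c (g • x) = P.lam c x := by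
  unfold lam
  rw [P.psi_inv, P.sigT_inv]

theorem lam_ne_iff {c : List ι} {x : X} : P.lam c x ≠ 0 ↔ P.psi c x ≠ 0 := by
  unfold lam
  rw [div_ne_zero_iff]
  exact ⟨fun h => h.1, fun h => ⟨h, (P.sigT_pos x).ne'⟩⟩

theorem rho_pos_of_lam {c : List ι} {x : X} (h : P.lam c x ≠ 0) : 0 < P.rho c x :=
  P.rho_pos_of_psi (P.lam_ne_iff.1 h)

theorem mem_Ac_of_lam {c : List ι} {x : X} (h : P.lam c x ≠ 0) : x ∈ P.Ac c :=
  P.mem_Ac_of_rho (P.rho_pos_of_lam h).ne'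

theorem closure_lam_subset_Ac (c : List ι) : closure {x | P.lam c x ≠ 0} ⊆ P.Ac c :=
  le_trans (closure_mono fun x hx => (P.rho_pos_of_lam hx).ne') (P.closure_rho_subset_Ac c)

theorem lam_support_finite (x : X) : {c : List ι | P.lam c x ≠ 0}.Finite := by
  refine Set.Finite.subset (P.psi_support_finite x) ?_
  intro c hc
  exact P.lam_ne_iff.1 hc

theorem summable_lam (x : X) : Summable (fun c : List ι => P.lam c x) :=
  (P.summable_psi x).div_const _

theorem tsum_lam (x : X) : ∑' c : List ι, P.lam c x = 1 := by
  unfold lam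
  rw [tsum_div_const]
  exact div_self (P.sigT_pos x).ne'

theorem sum_lam_le_one (s : Finset (List ι)) (x : X) : ∑ c ∈ s, P.lam c x ≤ 1 := by
  rw [← P.tsum_lam x]
  exact Summable.sum_le_tsum s (fun c _ => P.lam_nonneg c x) (P.summable_lam x)

theorem exists_good_nbhd (x₀ : X) : ∃ N : Set X, IsOpen N ∧ x₀ ∈ N ∧
    ∃ 𝒞 : Finset (List ι), ∀ x ∈ N, ∀ c : List ι, P.psi c x ≠ 0 → c ∈ 𝒞 := by
  obtain ⟨N₁, hN₁o, hxN₁, T, hT, hTc⟩ := P.exists_tube x₀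
  obtain ⟨c₀, hc₀ne, hc₀pos, -, -⟩ := P.exists_min x₀
  set ε := P.rho c₀ x₀ with hε
  set M := max c₀.length ⌈(2 : ℝ) / ε⌉₊ with hM
  refine ⟨N₁ ∩ {x | ε / 2 < P.rho c₀ x}, hN₁o.inter (isOpen_lt continuous_const (P.rho_cont c₀)),
    ⟨hxN₁, by simp only [mem_setOf_eq]; linarith⟩, (hT.listsLE M).toFinset, ?_⟩
  rintro x ⟨hxN, hxε⟩ c hc
  rw [Set.Finite.mem_toFinset]
  have hρ : 0 < P.rho c x := P.rho_pos_of_psi hc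
  constructor
  · by_contra hlen
    push_neg at hlen
    apply hc
    have h1 : c₀.length ≤ c.length - 1 := by
      have := le_max_left c₀.length ⌈(2 : ℝ) / ε⌉₊
      omega
    have h2 : ε / 2 ≤ P.sigLen (c.length - 1) x := (hxε.le).trans (P.le_sigLen h1 x)
    have h3 : (2 : ℝ) / ε < c.length := by
      have := le_max_right c₀.length ⌈(2 : ℝ) / ε⌉₊
      calc (2 : ℝ) / ε ≤ ⌈(2 : ℝ) / ε⌉₊ := Nat.le_ceil _
        _ ≤ (M : ℝ) := by exact_mod_cast this
        _ < c.length := by exact_mod_cast hlen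
    have hε2 : 0 < ε := hc₀pos
    have h4 : 1 < (c.length : ℝ) * (ε / 2) := by
      rw [div_lt_iff₀ hε2] at h3
      nlinarith
    have h5 : P.rho c x - c.length * P.sigLen (c.length - 1) x < 0 := by
      have h6 : (c.length : ℝ) * (ε / 2) ≤ c.length * P.sigLen (c.length - 1) x :=
        mul_le_mul_of_nonneg_left h2 (Nat.cast_nonneg _)
      have h7 := P.rho_le_one c x
      linarith
    unfold psi
    rw [max_eq_left h5.le]
  · exact fun i hi => hTc x hxN i (P.entries_mem hρ.ne' hi)

theorem sigLen_cont (m : ℕ) : Continuous (P.sigLen m) := by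
  rw [continuous_iff_continuousAt]
  intro x₀
  obtain ⟨N, hNo, hxN, T, hT, hTc⟩ := P.exists_tube x₀
  set s := (hT.listsLE m).toFinset with hs
  have heq : ∀ x ∈ N, P.sigLen m x = ∑ c ∈ s, if c.length ≤ m then P.rho c x else 0 := by
    intro x hx
    apply tsum_eq_sum
    intro c hc
    by_cases h : c.length ≤ m
    · rw [if_pos h]
      by_contra hρ
      apply hc
      rw [hs, Set.Finite.mem_toFinset]
      exact ⟨h, fun i hi => hTc x hx i (P.entries_mem hρ hi)⟩
    · exact if_neg h
  have hsum : Continuous fun x => ∑ c ∈ s, if c.length ≤ m then P.rho c x else 0 := by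
    apply continuous_finset_sum
    intro c _
    by_cases h : c.length ≤ m
    · simpa [h] using P.rho_cont c
    · simpa [h] using continuous_const (y := (0:ℝ))
  exact hsum.continuousAt.congr (Filter.eventuallyEq_of_mem (hNo.mem_nhds hxN)
    (fun x hx => (heq x hx).symm))

theorem psi_cont (c : List ι) : Continuous (P.psi c) :=
  continuous_const.max ((P.rho_cont c).sub (continuous_const.mul (P.sigLen_cont _)))

theorem sigT_cont : Continuous P.sigT := by
  rw [continuous_iff_continuousAt]
  intro x₀
  obtain ⟨N, hNo, hxN, 𝒞, h𝒞⟩ := P.exists_good_nbhd x₀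
  have heq : ∀ x ∈ N, P.sigT x = ∑ c ∈ 𝒞, P.psi c x := by
    intro x hx
    apply tsum_eq_sum
    intro c hc
    by_contra h
    exact hc (h𝒞 x hx c h)
  have hsum : Continuous fun x => ∑ c ∈ 𝒞, P.psi c x :=
    continuous_finset_sum _ fun c _ => P.psi_cont c
  exact hsum.continuousAt.congr (Filter.eventuallyEq_of_mem (hNo.mem_nhds hxN)
    (fun x hx => (heq x hx).symm))

theorem lam_cont (c : List ι) : Continuous (P.lam c) :=
  (P.psi_cont c).div P.sigT_cont (fun x => (P.sigT_pos x).ne')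

/-! ### time reparametrisation functions -/

noncomputable def tprime (b t : ℝ) : ℝ := min (max t 0) b

noncomputable def mgr (a b : ℝ) (n j : ℕ) : ℝ := min b (max a (grid n j))

noncomputable def tau (a b t : ℝ) (n : ℕ) (j : ℕ) : ℝ := min (tprime b t) (mgr a b n j)

theorem tprime_def (b t : ℝ) : tprime b t = min (max t 0) b := rfl

theorem mgr_def (a b : ℝ) (n j : ℕ) : mgr a b n j = min b (max a (grid n j)) := rfl

theorem tau_def (a b t : ℝ) (n j : ℕ) :
    tau a b t n j = min (tprime b t) (mgr a b n j) := rfl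

theorem tau_mono {a b t : ℝ} {n : ℕ} (hn : 0 < n) {j k : ℕ} (hjk : j ≤ k) :
    tau a b t n j ≤ tau a b t n k :=
  min_le_min le_rfl (min_le_min le_rfl (max_le_max le_rfl (grid_mono hn hjk)))

theorem tau_zero' {a b : ℝ} (t : ℝ) (n : ℕ) (ha : 0 ≤ a) (hab : a ≤ b) :
    tau a b t n 0 = min (max t 0) a := by
  have h1 : mgr a b n 0 = a := by
    rw [mgr_def, grid_zero, max_eq_left ha, min_eq_right hab]
  rw [tau_def, h1, tprime_def]
  rw [min_assoc]
  congr 1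
  exact min_eq_right hab

theorem tau_last {a b : ℝ} (t : ℝ) {n : ℕ} (hn : 0 < n) (hab : a ≤ b) (hb1 : b ≤ 1) :
    tau a b t n n = tprime b t := by
  have h1 : mgr a b n n = b := by
    rw [mgr_def, grid_self hn]
    exact min_eq_left (le_trans hb1 (le_max_right a 1))
  rw [tau_def, h1]
  exact min_eq_left (min_le_right _ _)

theorem tau_const {a b : ℝ} (t : ℝ) (n : ℕ) (hab : a = b) (j : ℕ) :
    tau a b t n j = tau a b t n 0 := by
  have h : ∀ k : ℕ, mgr a b n k = b := fun k => by
    rw [mgr_def]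
    exact min_eq_left (le_trans hab.ge (le_max_left a _))
  rw [tau_def, tau_def, h, h]

theorem tau_of_nonpos {a b t : ℝ} (ht : t ≤ 0) (ha : 0 ≤ a) (hab : a ≤ b) (n j : ℕ) :
    tau a b t n j = 0 := by
  have hb : 0 ≤ b := ha.trans hab
  have h1 : tprime b t = 0 := by rw [tprime, max_eq_right ht, min_eq_left hb]
  have h2 : 0 ≤ mgr a b n j := le_min hb (le_trans ha (le_max_left a _))
  rw [tau_def, h1, min_eq_left h2]

theorem min_max_zero_eq_tau_zero {a b : ℝ} (t : ℝ) (n : ℕ) (ha : 0 ≤ a) (hab : a ≤ b) :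
    min (max t 0) a = tau a b t n 0 := (tau_zero' t n ha hab).symm

/-- If two consecutive `tau` values are distinct, both lie in the corresponding grid
interval. -/
theorem tau_strict {a b t : ℝ} {n j : ℕ} (hab : a ≤ b) (hn : 0 < n)
    (h : tau a b t n j < tau a b t n (j + 1)) :
    tau a b t n j ∈ Icc (grid n j) (grid n (j + 1)) ∧
    tau a b t n (j + 1) ∈ Icc (grid n j) (grid n (j + 1)) := by
  set q := grid n j with hq
  set q' := grid n (j + 1) with hq'
  have hqq' : q ≤ q' := grid_mono hn (Nat.le_succ j)
  set T := tprime b t with hT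
  set m := mgr a b n j with hm
  set m' := mgr a b n (j + 1) with hm'
  rw [tau_def, tau_def, ← hT, ← hm, ← hm'] at h ⊢
  have hmm' : m < m' := by
    by_contra hc
    push_neg at hc
    exact absurd (min_le_min (le_refl T) hc) (not_le.2 h)
  have hTm : m < T := by
    by_contra hc
    push_neg at hc
    have h1 : min T m = T := min_eq_left hc
    have h2 : min T m' ≤ T := min_le_left _ _
    rw [h1] at h
    exact absurd h2 (not_le.2 h)
  have htauj : min T m = m := min_eq_right hTm.le
  have hmb : m < b := lt_of_lt_of_le hmm' (by rw [hm', mgr_def]; exact min_le_left _ _)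
  have hmq : m = max a q := by
    rcases le_total b (max a q) with hc | hc
    · exfalso
      have hmb' : m = b := by rw [hm, mgr_def, ← hq]; exact min_eq_left hc
      rw [hmb'] at hmb
      exact lt_irrefl _ hmb
    · rw [hm, mgr_def, ← hq]
      exact min_eq_right hc
  have haq' : a ≤ q' := by
    by_contra hc
    push_neg at hc
    have h1 : max a q = a := max_eq_left (hqq'.trans hc.le)
    have h2 : max a q' = a := max_eq_left hc.le
    rw [hm, hm', mgr_def, mgr_def, ← hq, ← hq', h1, h2] at hmm'
    exact lt_irrefl _ hmm'
  have hqm : q ≤ m := hmq ▸ le_max_right a q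
  have hmq' : m ≤ q' := hmq ▸ max_le haq' hqq'
  have hm'q' : m' ≤ q' := by
    rw [hm', mgr_def, ← hq']
    exact min_le_of_right_le (max_le haq' le_rfl)
  constructor
  · rw [htauj]; exact ⟨hqm, hmq'⟩
  · constructor
    · exact le_min (hqm.trans hTm.le) (hqm.trans hmm'.le)
    · exact le_trans (min_le_right _ _) hm'q'

theorem continuous_tprime {bb : X → ℝ} (hbC : Continuous bb) :
    Continuous fun z : X × ℝ => tprime (bb z.1) z.2 :=
  (continuous_snd.max continuous_const).min (hbC.comp continuous_fst)

theorem continuous_mgr {aa bb : X → ℝ} (haC : Continuous aa) (hbC : Continuous bb) (n j : ℕ) :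
    Continuous fun x : X => mgr (aa x) (bb x) n j :=
  hbC.min (haC.max continuous_const)

theorem continuous_tau {aa bb : X → ℝ} (haC : Continuous aa) (hbC : Continuous bb) (n j : ℕ) :
    Continuous fun z : X × ℝ => tau (aa z.1) (bb z.1) z.2 n j :=
  (continuous_tprime hbC).min ((continuous_mgr haC hbC n j).comp continuous_fst)

/-- Near any point, consecutive `tau`'s (as functions) are either eventually equal, or at the
point itself both lie in the grid interval. -/
theorem tau_cases {aa bb : X → ℝ} (haC : Continuous aa) (hbC : Continuous bb)
    (hab : ∀ x, aa x ≤ bb x) {n j : ℕ} (hn : 0 < n) (z₀ : X × ℝ) :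
    (∀ᶠ z : X × ℝ in 𝓝 z₀, tau (aa z.1) (bb z.1) z.2 n (j + 1) = tau (aa z.1) (bb z.1) z.2 n j) ∨
    (tau (aa z₀.1) (bb z₀.1) z₀.2 n j ∈ Icc (grid n j) (grid n (j + 1)) ∧
     tau (aa z₀.1) (bb z₀.1) z₀.2 n (j + 1) ∈ Icc (grid n j) (grid n (j + 1))) := by
  set q := grid n j with hq
  set q' := grid n (j + 1) with hq'
  have hqq' : q ≤ q' := grid_mono hn (Nat.le_succ j)
  by_cases h1 : tprime (bb z₀.1) z₀.2 < mgr (aa z₀.1) (bb z₀.1) n j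
  · left
    have hev := ContinuousAt.eventually_lt (continuous_tprime hbC).continuousAt
      ((continuous_mgr haC hbC n j).comp continuous_fst).continuousAt h1
    refine hev.mono fun z hz => ?_
    have hz' : tprime (bb z.1) z.2 ≤ mgr (aa z.1) (bb z.1) n j := hz.le
    have h2 : tprime (bb z.1) z.2 ≤ mgr (aa z.1) (bb z.1) n (j + 1) := by
      refine le_trans hz' ?_
      rw [mgr_def, mgr_def]
      exact min_le_min le_rfl (max_le_max le_rfl (grid_mono hn (Nat.le_succ j)))
    rw [tau_def, tau_def, min_eq_left h2, min_eq_left hz']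
  by_cases h2 : q' < aa z₀.1
  · left
    have hev := ContinuousAt.eventually_lt (continuousAt_const (y := q'))
      (haC.comp continuous_fst).continuousAt h2
    refine hev.mono fun z hz => ?_
    have ha1 : max (aa z.1) q = aa z.1 := max_eq_left (hqq'.trans hz.le)
    have ha2 : max (aa z.1) q' = aa z.1 := max_eq_left hz.le
    rw [tau_def, tau_def, mgr_def, mgr_def, ← hq, ← hq', ha1, ha2]
  by_cases h3 : bb z₀.1 < q
  · left
    have hev := ContinuousAt.eventually_lt (hbC.comp continuous_fst).continuousAt
      (continuousAt_const (y := q)) h3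
    refine hev.mono fun z hz => ?_
    have hb1 : mgr (aa z.1) (bb z.1) n j = bb z.1 :=
      min_eq_left (le_trans hz.le (le_trans (le_max_right _ _) le_rfl))
    have hb2 : mgr (aa z.1) (bb z.1) n (j + 1) = bb z.1 :=
      min_eq_left (le_trans hz.le (le_trans (le_max_right _ _)
        (max_le_max le_rfl (grid_mono hn (Nat.le_succ j)))))
    rw [tau_def, tau_def, hb1, hb2]
  · right
    push_neg at h1 h2 h3
    set T := tprime (bb z₀.1) z₀.2 with hT
    set m := mgr (aa z₀.1) (bb z₀.1) n j with hm
    set m' := mgr (aa z₀.1) (bb z₀.1) n (j + 1) with hm'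
    have hqm : q ≤ m := by
      rw [hm, mgr_def, ← hq]
      exact le_min h3 (le_trans (le_max_right _ _) le_rfl)
    have hmq' : m ≤ q' := by
      rw [hm, mgr_def, ← hq]
      exact le_trans (min_le_right _ _) (max_le h2 hqq')
    have hm'q' : m' ≤ q' := by
      rw [hm', mgr_def, ← hq']
      exact le_trans (min_le_right _ _) (max_le h2 le_rfl)
    have hmm' : m ≤ m' := by
      rw [hm, hm', mgr_def, mgr_def]
      exact min_le_min le_rfl (max_le_max le_rfl (grid_mono hn (Nat.le_succ j)))
    constructor
    · rw [tau_def, ← hT, ← hm, min_eq_right h1]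
      exact ⟨hqm, hmq'⟩
    · rw [tau_def, ← hT, ← hm']
      constructor
      · exact le_min (hqm.trans h1) (hqm.trans hmm')
      · exact le_trans (min_le_right _ _) hm'q'

/-! ### the block construction -/

noncomputable def blockAux (c : List ι) (a b : ℝ) (x : X) (t : ℝ) : ℕ → E → E
  | 0, e => e
  | j + 1, e => P.Om (c.getD j (dflt (ι := ι)))
      (P.Fr x (tau a b t c.length (j + 1)), blockAux c a b x t j e)

noncomputable def blockVal (c : List ι) (a b : ℝ) (x : X) (t : ℝ) (e : E) : E :=
  P.blockAux c a b x t c.length e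

theorem blockAux_proj {c : List ι} {a b : ℝ} {x : X} {t : ℝ}
    (hmem : ∀ j, j < c.length → tau a b t c.length j < tau a b t c.length (j + 1) →
      P.Fr x (tau a b t c.length j) ∈ P.U (c.getD j (dflt (ι := ι))) ∧
      P.Fr x (tau a b t c.length (j + 1)) ∈ P.U (c.getD j (dflt (ι := ι))))
    {e : E} (hpe : P.p e = P.Fr x (tau a b t c.length 0)) :
    ∀ j, j ≤ c.length → P.p (P.blockAux c a b x t j e) = P.Fr x (tau a b t c.length j) := by
  intro j
  induction j with
  | zero => intro _; exact hpe
  | succ j ih =>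
    intro hj
    have hjn : j < c.length := hj
    have ihj := ih (Nat.le_of_succ_le hj)
    have hn : 0 < c.length := lt_of_le_of_lt (Nat.zero_le j) hjn
    rcases eq_or_lt_of_le (tau_mono hn (Nat.le_succ j) (a := a) (b := b) (t := t)) with heq | hlt
    · show P.p (P.Om _ _) = _
      rw [← heq, ← ihj, P.hOmD]
    · obtain ⟨hU1, hU2⟩ := hmem j hjn hlt
      have h2' : P.p (P.blockAux c a b x t j e) ∈ P.U (c.getD j (dflt (ι := ι))) := by
        rw [ihj]; exact hU1
      exact P.hOmP _ _ hU2 h2'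

theorem blockAux_id {c : List ι} {a b : ℝ} {x : X} {t : ℝ}
    (hall : ∀ j, j ≤ c.length → tau a b t c.length j = tau a b t c.length 0)
    {e : E} (hpe : P.p e = P.Fr x (tau a b t c.length 0)) :
    ∀ j, j ≤ c.length → P.blockAux c a b x t j e = e := by
  intro j
  induction j with
  | zero => intro _; rfl
  | succ j ih =>
    intro hj
    have ihj := ih (Nat.le_of_succ_le hj)
    show P.Om _ (P.Fr x (tau a b t c.length (j + 1)), P.blockAux c a b x t j e) = e
    rw [ihj, hall (j + 1) hj, ← hpe, P.hOmD]

theorem blockAux_equiv (c : List ι) (a b : ℝ) (x : X) (t : ℝ) (g : G) (e : E) :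
    ∀ j, P.blockAux c a b (g • x) t j (g • e) = g • P.blockAux c a b x t j e := by
  intro j
  induction j with
  | zero => rfl
  | succ j ih =>
    show P.Om _ _ = _
    rw [ih, P.hFrE]
    exact P.hOmE _ g (P.Fr x (tau a b t c.length (j + 1)), P.blockAux c a b x t j e)

theorem mem_of_strict {c : List ι} {a b : ℝ} {x : X} {t : ℝ} (hab : a ≤ b)
    (hx : x ∈ P.Ac c ∨ a = b) :
    ∀ j, j < c.length → tau a b t c.length j < tau a b t c.length (j + 1) →
      P.Fr x (tau a b t c.length j) ∈ P.U (c.getD j (dflt (ι := ι))) ∧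
      P.Fr x (tau a b t c.length (j + 1)) ∈ P.U (c.getD j (dflt (ι := ι))) := by
  intro j hjn hlt
  rcases hx with hx | hx
  · have hn : 0 < c.length := lt_of_le_of_lt (Nat.zero_le j) hjn
    obtain ⟨h1, h2⟩ := tau_strict hab hn hlt
    exact ⟨hx j hjn _ h1, hx j hjn _ h2⟩
  · exfalso
    rw [tau_const t c.length hx (j + 1), tau_const t c.length hx j] at hlt
    exact lt_irrefl _ hlt

theorem blockVal_proj {c : List ι} {a b : ℝ} {x : X} {t : ℝ}
    (ha0 : 0 ≤ a) (hab : a ≤ b) (hb1 : b ≤ 1) (hnil : c.length = 0 → a = b)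
    (hmem : x ∈ P.Ac c ∨ a = b) {e : E} (hpe : P.p e = P.Fr x (min (max t 0) a)) :
    P.p (P.blockVal c a b x t e) = P.Fr x (min (max t 0) b) := by
  rcases Nat.eq_zero_or_pos c.length with hn | hn
  · have hab2 := hnil hn
    have h0 : P.blockVal c a b x t e = e := by
      rw [blockVal, hn]
      rfl
    rw [h0, hpe, hab2]
  · have hpe' : P.p e = P.Fr x (tau a b t c.length 0) := by
      rw [tau_zero' t c.length ha0 hab]; exact hpe
    have := P.blockAux_proj (P.mem_of_strict hab hmem) hpe' c.length le_rfl
    rw [blockVal, this, tau_last t hn hab hb1, tprime]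

theorem blockVal_id_of_eq {c : List ι} {a b : ℝ} {x : X} {t : ℝ}
    (ha0 : 0 ≤ a) (hab : a = b) {e : E} (hpe : P.p e = P.Fr x (min (max t 0) a)) :
    P.blockVal c a b x t e = e := by
  have hpe' : P.p e = P.Fr x (tau a b t c.length 0) := by
    rw [tau_zero' t c.length ha0 hab.le]; exact hpe
  exact P.blockAux_id (fun j _ => tau_const t c.length hab j) hpe' c.length le_rfl

theorem blockVal_zero {c : List ι} {a b : ℝ} {x : X} {t : ℝ} (ht : t ≤ 0)
    (ha0 : 0 ≤ a) (hab : a ≤ b) {e : E} (hpe : P.p e = P.Fr x 0) :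
    P.blockVal c a b x t e = e := by
  have hpe' : P.p e = P.Fr x (tau a b t c.length 0) := by
    rw [tau_of_nonpos ht ha0 hab]; exact hpe
  refine P.blockAux_id (fun j _ => ?_) hpe' c.length le_rfl
  rw [tau_of_nonpos ht ha0 hab, tau_of_nonpos ht ha0 hab]

theorem blockVal_equiv (c : List ι) (a b : ℝ) (x : X) (t : ℝ) (g : G) (e : E) :
    P.blockVal c a b (g • x) t (g • e) = g • P.blockVal c a b x t e :=
  P.blockAux_equiv c a b x t g e c.length

/-! ### the chain construction -/

noncomputable def chain (x : X) (t : ℝ) : List (List ι) → ℝ × E → ℝ × E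
  | [], ae => ae
  | c :: L, ae =>
    chain x t L (ae.1 + P.lam c x, P.blockVal c ae.1 (ae.1 + P.lam c x) x t ae.2)

noncomputable def listSum (x : X) (L : List (List ι)) : ℝ := (L.map fun c => P.lam c x).sum

theorem listSum_nil (x : X) : P.listSum x [] = 0 := rfl

theorem listSum_cons (x : X) (c : List ι) (L : List (List ι)) :
    P.listSum x (c :: L) = P.lam c x + P.listSum x L := by
  simp [listSum]

theorem listSum_nonneg (x : X) (L : List (List ι)) : 0 ≤ P.listSum x L := by
  induction L with
  | nil => exact le_refl 0
  | cons c L ih =>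
    rw [P.listSum_cons]
    exact add_nonneg (P.lam_nonneg c x) ih

theorem chain_fst (x : X) (t : ℝ) (L : List (List ι)) (ae : ℝ × E) :
    (P.chain x t L ae).1 = ae.1 + P.listSum x L := by
  induction L generalizing ae with
  | nil => simp [chain, listSum_nil]
  | cons c L ih =>
    rw [chain, ih, P.listSum_cons]
    ring

theorem chain_proj {x : X} {t : ℝ} {L : List (List ι)} {ae : ℝ × E}
    (hA0 : 0 ≤ ae.1) (hle : ae.1 + P.listSum x L ≤ 1)
    (hAc : ∀ c ∈ L, P.lam c x = 0 ∨ x ∈ P.Ac c)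
    (hpe : P.p ae.2 = P.Fr x (min (max t 0) ae.1)) :
    P.p (P.chain x t L ae).2 = P.Fr x (min (max t 0) (ae.1 + P.listSum x L)) := by
  induction L generalizing ae with
  | nil => rw [chain]; rw [P.listSum_nil, add_zero]; exact hpe
  | cons c L ih =>
    rw [chain]
    rw [P.listSum_cons x c L] at hle ⊢
    have hlam : 0 ≤ P.lam c x := P.lam_nonneg c x
    have hLs : 0 ≤ P.listSum x L := P.listSum_nonneg x L
    have hb1 : ae.1 + P.lam c x ≤ 1 := by linarith
    have hmem : x ∈ P.Ac c ∨ ae.1 = ae.1 + P.lam c x := by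
      rcases hAc c List.mem_cons_self with h | h
      · exact Or.inr (by rw [h, add_zero])
      · exact Or.inl h
    have hnil : c.length = 0 → ae.1 = ae.1 + P.lam c x := by
      intro h
      rw [List.length_eq_zero_iff.1 h, P.lam_nil, add_zero]
    have hpe' : P.p (P.blockVal c ae.1 (ae.1 + P.lam c x) x t ae.2) =
        P.Fr x (min (max t 0) (ae.1 + P.lam c x)) :=
      P.blockVal_proj hA0 (by linarith) hb1 hnil hmem hpe
    have := ih (ae := (ae.1 + P.lam c x, P.blockVal c ae.1 (ae.1 + P.lam c x) x t ae.2))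
      (by simp only; linarith) (by simp only; linarith) (fun d hd => hAc d (List.mem_cons_of_mem c hd)) hpe'
    rw [this]
    congr 1
    simp only
    ring_nf

theorem chain_zero {x : X} {t : ℝ} (ht : t ≤ 0) {L : List (List ι)} {ae : ℝ × E}
    (hA0 : 0 ≤ ae.1) (hpe : P.p ae.2 = P.Fr x 0) :
    (P.chain x t L ae).2 = ae.2 := by
  induction L generalizing ae with
  | nil => rfl
  | cons c L ih =>
    rw [chain]
    have h1 : P.blockVal c ae.1 (ae.1 + P.lam c x) x t ae.2 = ae.2 :=
      P.blockVal_zero ht hA0 (le_add_of_nonneg_right (P.lam_nonneg c x)) hpe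
    rw [h1]
    exact ih (ae := (ae.1 + P.lam c x, ae.2))
      (by simp only; exact add_nonneg hA0 (P.lam_nonneg c x)) hpe


theorem chain_filter {x : X} {t : ℝ} {L : List (List ι)} {ae : ℝ × E}
    (hA0 : 0 ≤ ae.1) (hle : ae.1 + P.listSum x L ≤ 1)
    (hpe : P.p ae.2 = P.Fr x (min (max t 0) ae.1)) :
    P.chain x t L ae = P.chain x t (L.filter fun c => !decide (P.lam c x = 0)) ae := by
  induction L generalizing ae with
  | nil => rfl
  | cons c L ih =>
    rw [P.listSum_cons] at hle
    have hLs : 0 ≤ P.listSum x L := P.listSum_nonneg x L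
    have hlam : 0 ≤ P.lam c x := P.lam_nonneg c x
    by_cases hc : P.lam c x = 0
    · have hfil : (c :: L).filter (fun c => !decide (P.lam c x = 0)) =
          L.filter (fun c => !decide (P.lam c x = 0)) := by
        rw [List.filter_cons_of_neg (by simp [hc])]
      rw [chain, hfil]
      have hval : P.blockVal c ae.1 (ae.1 + P.lam c x) x t ae.2 = ae.2 := by
        rw [hc, add_zero]
        exact P.blockVal_id_of_eq hA0 rfl hpe
      rw [hval, hc, add_zero, Prod.mk.eta]
      exact ih hA0 (by linarith [hc ▸ hle]) hpe
    · have hfil : (c :: L).filter (fun c => !decide (P.lam c x = 0)) =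
          c :: L.filter (fun c => !decide (P.lam c x = 0)) := by
        rw [List.filter_cons_of_pos (by simp [hc])]
      rw [chain, hfil, chain]
      have hb1 : ae.1 + P.lam c x ≤ 1 := by linarith
      have hpe' : P.p (P.blockVal c ae.1 (ae.1 + P.lam c x) x t ae.2) =
          P.Fr x (min (max t 0) (ae.1 + P.lam c x)) :=
        P.blockVal_proj hA0 (by linarith) hb1
          (fun h => by rw [List.length_eq_zero_iff.1 h, P.lam_nil, add_zero])
          (Or.inl (P.mem_Ac_of_lam hc)) hpe
      exact ih (ae := (ae.1 + P.lam c x, P.blockVal c ae.1 (ae.1 + P.lam c x) x t ae.2))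
        (by simp only; linarith) (by simp only; linarith) hpe'

theorem chain_equiv {x : X} {t : ℝ} (g : G) (L : List (List ι)) (ae : ℝ × E) :
    P.chain (g • x) t L (ae.1, g • ae.2) =
      ((P.chain x t L ae).1, g • (P.chain x t L ae).2) := by
  induction L generalizing ae with
  | nil => rfl
  | cons c L ih =>
    rw [chain, chain]
    have h1 : P.lam c (g • x) = P.lam c x := P.lam_inv c g x
    have h2 : P.blockVal c ae.1 (ae.1 + P.lam c x) (g • x) t (g • ae.2) =
        g • P.blockVal c ae.1 (ae.1 + P.lam c x) x t ae.2 :=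
      P.blockVal_equiv c ae.1 (ae.1 + P.lam c x) x t g ae.2
    simp only [h1]
    rw [h2]
    exact ih (ae := (ae.1 + P.lam c x, P.blockVal c ae.1 (ae.1 + P.lam c x) x t ae.2))

/-! ### continuity of the block and chain constructions -/

theorem blockAux_contAt {c : List ι} {N : Set X} (hNo : IsOpen N) (hNA : N ⊆ P.Ac c)
    {aa bb : X → ℝ} (haC : Continuous aa) (hbC : Continuous bb)
    (hab : ∀ x, aa x ≤ bb x)
    {ee : X × ℝ → E}
    (hep : ∀ z : X × ℝ, z.1 ∈ N →
      P.p (ee z) = P.Fr z.1 (tau (aa z.1) (bb z.1) z.2 c.length 0))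
    {z₀ : X × ℝ} (hz₀ : z₀.1 ∈ N) (heC : ContinuousAt ee z₀) :
    ∀ j, j ≤ c.length →
      ContinuousAt (fun z => P.blockAux c (aa z.1) (bb z.1) z.1 z.2 j (ee z)) z₀ := by
  have hproj : ∀ j, j ≤ c.length → ∀ z : X × ℝ, z.1 ∈ N →
      P.p (P.blockAux c (aa z.1) (bb z.1) z.1 z.2 j (ee z)) =
        P.Fr z.1 (tau (aa z.1) (bb z.1) z.2 c.length j) := fun j hj z hz =>
    P.blockAux_proj (P.mem_of_strict (hab z.1) (Or.inl (hNA hz))) (hep z hz) j hj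
  intro j
  induction j with
  | zero => intro _; exact heC
  | succ j ih =>
    intro hj
    have hjn : j < c.length := hj
    have hn : 0 < c.length := lt_of_le_of_lt (Nat.zero_le j) hjn
    have ihc := ih (Nat.le_of_succ_le hj)
    show ContinuousAt (fun z => P.Om (c.getD j (dflt (ι := ι)))
      (P.Fr z.1 (tau (aa z.1) (bb z.1) z.2 c.length (j + 1)),
        P.blockAux c (aa z.1) (bb z.1) z.1 z.2 j (ee z))) z₀
    rcases tau_cases haC hbC hab hn z₀ (j := j) with hev | ⟨hτ1, hτ2⟩
    · have hevN : ∀ᶠ z : X × ℝ in 𝓝 z₀, z.1 ∈ N :=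
        (hNo.preimage continuous_fst).mem_nhds hz₀
      apply ihc.congr
      filter_upwards [hev, hevN] with z h1 h2
      rw [h1, ← hproj j (Nat.le_of_succ_le hj) z h2, P.hOmD]
    · have hU1 : P.Fr z₀.1 (tau (aa z₀.1) (bb z₀.1) z₀.2 c.length j)
          ∈ P.U (c.getD j (dflt (ι := ι))) := hNA hz₀ j hjn _ hτ1
      have hU2 : P.Fr z₀.1 (tau (aa z₀.1) (bb z₀.1) z₀.2 c.length (j + 1))
          ∈ P.U (c.getD j (dflt (ι := ι))) := hNA hz₀ j hjn _ hτ2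
      have hBproj := hproj j (Nat.le_of_succ_le hj) z₀ hz₀
      have hVo : IsOpen {w : B × E | w.1 ∈ P.U (c.getD j (dflt (ι := ι))) ∧
          P.p w.2 ∈ P.U (c.getD j (dflt (ι := ι)))} := by
        rw [setOf_and]
        exact ((P.hUo _).preimage continuous_fst).inter
          ((P.hUo _).preimage (P.hpC.comp continuous_snd))
      have hw₀ : (P.Fr z₀.1 (tau (aa z₀.1) (bb z₀.1) z₀.2 c.length (j + 1)),
          P.blockAux c (aa z₀.1) (bb z₀.1) z₀.1 z₀.2 j (ee z₀)) ∈
          {w : B × E | w.1 ∈ P.U (c.getD j (dflt (ι := ι))) ∧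
            P.p w.2 ∈ P.U (c.getD j (dflt (ι := ι)))} := by
        refine ⟨hU2, ?_⟩
        show P.p (P.blockAux c (aa z₀.1) (bb z₀.1) z₀.1 z₀.2 j (ee z₀)) ∈ _
        rw [hBproj]
        exact hU1
      have hWc : ContinuousAt (fun z : X × ℝ =>
          ((P.Fr z.1 (tau (aa z.1) (bb z.1) z.2 c.length (j + 1)),
            P.blockAux c (aa z.1) (bb z.1) z.1 z.2 j (ee z)) : B × E)) z₀ :=
        ContinuousAt.prodMk
          ((P.hFrC.comp (continuous_fst.prodMk
            (continuous_tau haC hbC c.length (j + 1)))).continuousAt) ihc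
      exact ContinuousAt.comp ((P.hOmC _).continuousAt (hVo.mem_nhds hw₀)) hWc

theorem chain_contAt {N : Set X} (hNo : IsOpen N) {L : List (List ι)}
    (hL : ∀ c ∈ L, N ⊆ P.Ac c) {A : X → ℝ} (hAC : Continuous A) (hA0 : ∀ x, 0 ≤ A x)
    (hA1 : ∀ x, A x + P.listSum x L ≤ 1) {ee : X × ℝ → E}
    (hep : ∀ z : X × ℝ, z.1 ∈ N → P.p (ee z) = P.Fr z.1 (min (max z.2 0) (A z.1)))
    {z₀ : X × ℝ} (hz₀ : z₀.1 ∈ N) (heC : ContinuousAt ee z₀) :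
    ContinuousAt (fun z => (P.chain z.1 z.2 L (A z.1, ee z)).2) z₀ := by
  induction L generalizing A ee with
  | nil => exact heC
  | cons c L ih =>
    have hlam : ∀ x, 0 ≤ P.lam c x := fun x => P.lam_nonneg c x
    have hab : ∀ x, A x ≤ A x + P.lam c x := fun x => le_add_of_nonneg_right (hlam x)
    have hA'C : Continuous fun x => A x + P.lam c x := hAC.add (P.lam_cont c)
    have hA'0 : ∀ x, 0 ≤ A x + P.lam c x := fun x => add_nonneg (hA0 x) (hlam x)
    have hA'1 : ∀ x, (A x + P.lam c x) + P.listSum x L ≤ 1 := by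
      intro x
      have := hA1 x
      rw [P.listSum_cons] at this
      linarith
    have hb1 : ∀ x, A x + P.lam c x ≤ 1 := by
      intro x
      have := hA'1 x
      have := P.listSum_nonneg x L
      linarith
    have hep' : ∀ z : X × ℝ, z.1 ∈ N →
        P.p (P.blockVal c (A z.1) (A z.1 + P.lam c z.1) z.1 z.2 (ee z)) =
          P.Fr z.1 (min (max z.2 0) (A z.1 + P.lam c z.1)) := by
      intro z hz
      refine P.blockVal_proj (hA0 z.1) (hab z.1) (hb1 z.1) ?_ ?_ (hep z hz)
      · intro h
        rw [List.length_eq_zero_iff.1 h, P.lam_nil, add_zero]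
      · by_cases hc : P.lam c z.1 = 0
        · exact Or.inr (by rw [hc, add_zero])
        · exact Or.inl (P.mem_Ac_of_lam hc)
    have hep'' : ∀ z : X × ℝ, z.1 ∈ N →
        P.p (ee z) = P.Fr z.1 (tau (A z.1) (A z.1 + P.lam c z.1) z.2 c.length 0) := by
      intro z hz
      rw [tau_zero' z.2 c.length (hA0 z.1) (hab z.1)]
      exact hep z hz
    have heC' : ContinuousAt (fun z : X × ℝ =>
        P.blockVal c (A z.1) (A z.1 + P.lam c z.1) z.1 z.2 (ee z)) z₀ :=
      P.blockAux_contAt hNo (hL c List.mem_cons_self) hAC hA'C hab hep'' hz₀ heC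
        c.length le_rfl
    exact ih (fun d hd => hL d (List.mem_cons_of_mem c hd)) hA'C hA'0 hA'1 hep' heC'

/-! ### the final lift -/

theorem exists_lift : ∃ F : X × ℝ → E, Continuous F ∧
    (∀ (g : G) (z : X × ℝ), F (g • z.1, z.2) = g • F z) ∧
    (∀ z : X × ℝ, P.p (F z) = P.Fr z.1 (min (max z.2 0) 1)) ∧
    (∀ x : X, F (x, 0) = P.f x) := by
  classical
  letI : LinearOrder (List ι) := linearOrderOfSTO WellOrderingRel
  set Sfin : X → Finset (List ι) := fun x => (P.lam_support_finite x).toFinset with hSfin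
  set sortS : X → List (List ι) := fun x => (Sfin x).sort (· ≤ ·) with hsortS
  set F : X × ℝ → E := fun z => (P.chain z.1 z.2 (sortS z.1) (0, P.f z.1)).2 with hF
  have hsortSum : ∀ (s : Finset (List ι)) (x : X),
      P.listSum x (s.sort (· ≤ ·)) = ∑ c ∈ s, P.lam c x := by
    intro s x
    rw [listSum, ← Finset.sum_map_toList]
    exact List.Perm.sum_eq (List.Perm.map _ (Finset.sort_perm_toList s (· ≤ ·)))
  have hmem_sortS : ∀ (x : X) (c : List ι), c ∈ sortS x ↔ P.lam c x ≠ 0 := by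
    intro x c
    rw [hsortS]
    simp only [Finset.mem_sort, hSfin, Set.Finite.mem_toFinset, mem_setOf_eq]
  have hsum1 : ∀ x : X, P.listSum x (sortS x) = 1 := by
    intro x
    rw [hsortS]
    simp only
    rw [hsortSum]
    rw [← tsum_eq_sum (L := SummationFilter.unconditional _) (f := fun c => P.lam c x) (s := Sfin x)
      (fun c hc => by
        by_contra h
        exact hc ((P.lam_support_finite x).mem_toFinset.2 h))]
    exact P.tsum_lam x
  have hAc_sortS : ∀ x : X, ∀ c ∈ sortS x, P.lam c x = 0 ∨ x ∈ P.Ac c := fun x c hc =>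
    Or.inr (P.mem_Ac_of_lam ((hmem_sortS x c).1 hc))
  have hpe0 : ∀ (x : X) (t : ℝ), P.p (P.f x) = P.Fr x (min (max t 0) 0) := by
    intro x t
    rw [min_eq_right (le_max_right t 0)]
    exact P.hpf x
  have hproj : ∀ z : X × ℝ, P.p (F z) = P.Fr z.1 (min (max z.2 0) 1) := by
    intro z
    rw [hF]
    simp only
    have h1 := P.chain_proj (x := z.1) (t := z.2) (L := sortS z.1) (ae := (0, P.f z.1))
      le_rfl (by rw [hsum1 z.1]; norm_num) (hAc_sortS z.1) (hpe0 z.1 z.2)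
    rw [h1, hsum1 z.1]
    norm_num
  have hinit : ∀ x : X, F (x, 0) = P.f x := by
    intro x
    rw [hF]
    simp only
    exact P.chain_zero le_rfl le_rfl (P.hpf x)
  have hequi : ∀ (g : G) (z : X × ℝ), F (g • z.1, z.2) = g • F z := by
    intro g z
    have hSfin_eq : Sfin (g • z.1) = Sfin z.1 := by
      ext c
      simp only [hSfin, Set.Finite.mem_toFinset, mem_setOf_eq, P.lam_inv c g z.1]
    have hsort_eq : sortS (g • z.1) = sortS z.1 := by
      rw [hsortS]
      simp only
      rw [hSfin_eq]
    rw [hF]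
    simp only
    rw [hsort_eq, P.hfE g z.1]
    have h2 := P.chain_equiv (x := z.1) (t := z.2) g (sortS z.1) (0, P.f z.1)
    simp only at h2
    rw [h2]
  have hcont : Continuous F := by
    rw [continuous_iff_continuousAt]
    intro z₀
    obtain ⟨N₁, hN₁o, hxN₁, 𝒞, h𝒞⟩ := P.exists_good_nbhd z₀.1
    set 𝒞g : Finset (List ι) := 𝒞.filter (fun c => z₀.1 ∈ closure {x : X | P.lam c x ≠ 0})
      with h𝒞g
    set N : Set X := (N₁ ∩ ⋂ c ∈ 𝒞 \ 𝒞g, (closure {x : X | P.lam c x ≠ 0})ᶜ) ∩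
      ⋂ c ∈ 𝒞g, P.Ac c with hN
    have hNo : IsOpen N :=
      (hN₁o.inter (isOpen_biInter_finset fun c _ => isClosed_closure.isOpen_compl)).inter
        (isOpen_biInter_finset fun c _ => P.isOpen_Ac c)
    have hz₀N : z₀.1 ∈ N := by
      refine ⟨⟨hxN₁, ?_⟩, ?_⟩
      · rw [mem_iInter₂]
        intro c hc
        rw [Finset.mem_sdiff, h𝒞g, Finset.mem_filter] at hc
        intro hmem
        exact hc.2 ⟨hc.1, hmem⟩
      · rw [mem_iInter₂]
        intro c hc
        rw [h𝒞g, Finset.mem_filter] at hc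
        exact P.closure_lam_subset_Ac c hc.2
    set L : List (List ι) := 𝒞g.sort (· ≤ ·) with hLdef
    have hLA : ∀ c ∈ L, N ⊆ P.Ac c := by
      intro c hc x hx
      have hc' : c ∈ 𝒞g := by
        rw [hLdef] at hc
        exact Finset.mem_sort (α := List ι) (· ≤ ·) |>.1 hc
      exact (mem_iInter₂.1 hx.2) c hc'
    have hS : ∀ x ∈ N, ∀ c : List ι, P.lam c x ≠ 0 → c ∈ 𝒞g := by
      intro x hx c hlam
      have hc𝒞 : c ∈ 𝒞 := h𝒞 x hx.1.1 c (P.lam_ne_iff.1 hlam)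
      by_contra hcg
      have hcomp : x ∈ (closure {x : X | P.lam c x ≠ 0})ᶜ :=
        (mem_iInter₂.1 hx.1.2) c (Finset.mem_sdiff.2 ⟨hc𝒞, hcg⟩)
      exact hcomp (subset_closure hlam)
    have hA1L : ∀ x : X, (0:ℝ) + P.listSum x L ≤ 1 := by
      intro x
      rw [zero_add, hLdef, hsortSum]
      exact P.sum_lam_le_one 𝒞g x
    have hagree : ∀ z : X × ℝ, z.1 ∈ N → F z = (P.chain z.1 z.2 L ((0:ℝ), P.f z.1)).2 := by
      intro z hz
      rw [hF]
      simp only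
      have h1 := P.chain_filter (x := z.1) (t := z.2) (L := sortS z.1) (ae := (0, P.f z.1))
        le_rfl (by rw [hsum1 z.1]; norm_num) (hpe0 z.1 z.2)
      have h2 := P.chain_filter (x := z.1) (t := z.2) (L := L) (ae := (0, P.f z.1))
        le_rfl (hA1L z.1) (hpe0 z.1 z.2)
      have hfeq : (sortS z.1).filter (fun c => !decide (P.lam c z.1 = 0)) =
          L.filter (fun c => !decide (P.lam c z.1 = 0)) := by
        apply fun h1 h2 h3 => List.Perm.eq_of_pairwise' (r := (· ≤ · : List ι → List ι → Prop)) h2 h3 h1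
        · apply (List.perm_ext_iff_of_nodup
            ((Finset.sort_nodup _ _).filter _) ((Finset.sort_nodup _ _).filter _)).2
          intro c
          simp only [List.mem_filter, Bool.not_eq_true', decide_eq_false_iff_not]
          constructor
          · rintro ⟨hc1, hc2⟩
            exact ⟨(Finset.mem_sort (α := List ι) (· ≤ ·)).2 (hS z.1 hz c hc2), hc2⟩
          · rintro ⟨hc1, hc2⟩
            exact ⟨(hmem_sortS z.1 c).2 hc2, hc2⟩
        · exact (Finset.pairwise_sort _ _).filter _
        · exact (Finset.pairwise_sort _ _).filter _
      rw [h1, h2, hfeq]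
    have hcA : ContinuousAt (fun z : X × ℝ =>
        (P.chain z.1 z.2 L ((fun _ : X => (0:ℝ)) z.1, P.f z.1)).2) z₀ :=
      P.chain_contAt hNo hLA continuous_const (fun _ => le_rfl) hA1L
        (fun z _ => hpe0 z.1 z.2) hz₀N ((P.hfC.comp continuous_fst).continuousAt)
    apply hcA.congr
    have hevN : ∀ᶠ z : X × ℝ in 𝓝 z₀, z.1 ∈ N := (hNo.preimage continuous_fst).mem_nhds hz₀N
    filter_upwards [hevN] with z hz
    exact (hagree z hz).symm
  exact ⟨F, hcont, hequi, hproj, hinit⟩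

end LiftPack

end Construction


open Set Filter Topology MeasureTheory Pointwise

section Averaging

variable {G B : Type*} [Group G] [TopologicalSpace G] [IsTopologicalGroup G] [CompactSpace G]
  [T2Space G] [TopologicalSpace B] [MulAction G B] [ContinuousSMul G B]

theorem isOpen_forall_mem' {X Y B : Type*} [TopologicalSpace X] [TopologicalSpace Y]
    [TopologicalSpace B] {K : Set Y} (hK : IsCompact K) {F : X × Y → B} (hF : Continuous F)
    {U : Set B} (hU : IsOpen U) : IsOpen {x : X | ∀ t ∈ K, F (x, t) ∈ U} := by
  rw [isOpen_iff_mem_nhds]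
  intro x hx
  exact hK.eventually_forall_of_forall_eventually (x₀ := x) (P := fun x t => F (x, t) ∈ U)
    (fun y hy => hF.continuousAt.preimage_mem_nhds (hU.mem_nhds (hx y hy)))

theorem continuous_avg [MeasurableSpace G] [BorelSpace G] (μ : Measure G)
    [IsProbabilityMeasure μ] {h : G × B → ℝ} (hh : Continuous h) :
    Continuous fun b => ∫ g, h (g, b) ∂μ := by
  have hint : ∀ b, Integrable (fun g => h (g, b)) μ := by
    intro b
    refine (hh.comp (continuous_id.prodMk continuous_const)).integrable_of_hasCompactSupport ?_
    exact IsCompact.of_isClosed_subset isCompact_univ (isClosed_tsupport _) (subset_univ _)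
  rw [continuous_iff_continuousAt]
  intro b₀
  apply Metric.tendsto_nhds.2
  intro ε hε
  have key : ∀ᶠ b in 𝓝 b₀, ∀ g ∈ (univ : Set G), |h (g, b) - h (g, b₀)| < ε / 2 := by
    apply isCompact_univ.eventually_forall_of_forall_eventually (x₀ := b₀)
      (P := fun b g => |h (g, b) - h (g, b₀)| < ε / 2)
    intro g _
    have hc : ContinuousAt (fun z : B × G => |h (z.2, z.1) - h (z.2, b₀)|) (b₀, g) := by
      apply ContinuousAt.abs
      exact ((hh.comp (continuous_snd.prodMk continuous_fst)).sub
        (hh.comp ((continuous_snd.prodMk continuous_const)))).continuousAt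
    have h0 : |h (g, b₀) - h (g, b₀)| < ε / 2 := by simp [abs_of_nonneg]; linarith
    exact hc.eventually_lt continuousAt_const (by simpa using h0)
  refine key.mono fun b hb => ?_
  have h1 : ∫ g, h (g, b) ∂μ - ∫ g, h (g, b₀) ∂μ = ∫ g, (h (g, b) - h (g, b₀)) ∂μ :=
    (integral_sub (hint b) (hint b₀)).symm
  rw [Real.dist_eq, h1, ← Real.norm_eq_abs]
  calc ‖∫ g, (h (g, b) - h (g, b₀)) ∂μ‖ ≤ ε / 2 * (μ univ).toReal := by
        apply norm_integral_le_of_norm_le_const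
        exact Eventually.of_forall fun g => by
          simpa [Real.norm_eq_abs] using (hb g (mem_univ g)).le
    _ < ε := by simp [measure_univ]; linarith

theorem exists_invariant_partition [ParacompactSpace B] [T2Space B] {ι : Type*}
    (U : ι → Set B) (hUo : ∀ i, IsOpen (U i)) (hUinv : ∀ (i) (g : G), g • U i = U i)
    (hUcov : ∀ b : B, ∃ i, b ∈ U i) :
    ∃ φ : ι → B → ℝ,
      (∀ i, Continuous (φ i)) ∧
      (∀ i b, 0 ≤ φ i b) ∧ (∀ i b, φ i b ≤ 1) ∧
      (∀ (i) (g : G) (b), φ i (g • b) = φ i b) ∧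
      (∀ i, closure {b | φ i b ≠ 0} ⊆ U i) ∧
      (LocallyFinite fun i => {b | φ i b ≠ 0}) ∧
      (∀ b, ∃ i, 0 < φ i b) := by
  classical
  -- measure-theoretic setup
  letI : MeasurableSpace G := borel G
  haveI : BorelSpace G := ⟨rfl⟩
  haveI : Nonempty G := ⟨1⟩
  set μ : Measure G := Measure.haarMeasure (⊤ : TopologicalSpace.PositiveCompacts G) with hμ
  haveI : IsProbabilityMeasure μ := by
    constructor
    have := Measure.haarMeasure_self (K₀ := (⊤ : TopologicalSpace.PositiveCompacts G))
    rwa [TopologicalSpace.PositiveCompacts.coe_top] at this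
  -- the underlying partition of unity
  obtain ⟨f, hf⟩ := PartitionOfUnity.exists_isSubordinate (s := univ) isClosed_univ U hUo
    (fun b _ => mem_iUnion.2 (hUcov b))
  -- membership in invariant sets is invariant
  have hUmem : ∀ (i) (g : G) (b), b ∈ U i ↔ g • b ∈ U i := by
    intro i g b
    constructor
    · intro hb
      rw [← hUinv i g]; exact smul_mem_smul_set hb
    · intro hb
      have := smul_mem_smul_set (a := g⁻¹) hb
      rwa [hUinv i g⁻¹, inv_smul_smul] at this
  -- definitions
  set φ : ι → B → ℝ := fun i b => ∫ g, f i (g⁻¹ • b) ∂μ with hφdef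
  have hcont' : ∀ i, Continuous fun z : G × B => f i (z.1⁻¹ • z.2) :=
    fun i => (f i).continuous.comp ((continuous_fst.inv).smul continuous_snd)
  have hint : ∀ i b, Integrable (fun g => f i (g⁻¹ • b)) μ := by
    intro i b
    refine (((f i).continuous.comp ((continuous_inv).smul continuous_const))
      ).integrable_of_hasCompactSupport ?_
    exact IsCompact.of_isClosed_subset isCompact_univ (isClosed_tsupport _) (subset_univ _)
  have hnonneg : ∀ i b, 0 ≤ φ i b := fun i b =>
    integral_nonneg fun g => f.nonneg i (g⁻¹ • b)
  have hle1 : ∀ i b, φ i b ≤ 1 := by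
    intro i b
    have h1 : φ i b ≤ ∫ _ : G, (1 : ℝ) ∂μ :=
      integral_mono (hint i b) (integrable_const 1) (fun g => f.le_one i (g⁻¹ • b))
    simpa [measure_univ] using h1
  have hinvar : ∀ (i) (g : G) (b), φ i (g • b) = φ i b := by
    intro i g₀ b
    have := integral_mul_left_eq_self (μ := μ) (fun x : G => f i (x⁻¹ • g₀ • b)) g₀
    calc φ i (g₀ • b) = ∫ x, f i (x⁻¹ • g₀ • b) ∂μ := rfl
      _ = ∫ x, f i ((g₀ * x)⁻¹ • g₀ • b) ∂μ := by
          rw [this]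
      _ = ∫ x, f i (x⁻¹ • b) ∂μ := by
          congr 1; funext x
          congr 1
          rw [mul_inv_rev, mul_smul, inv_smul_smul]
      _ = φ i b := rfl
  -- support control
  have hsupp : ∀ i, {b | φ i b ≠ 0} ⊆ {b | ∃ g : G, g • b ∈ tsupport (f i)} := by
    intro i b hb
    by_contra hcon
    simp only [mem_setOf_eq, not_exists] at hcon
    apply hb
    have : ∀ g : G, f i (g⁻¹ • b) = 0 := by
      intro g
      by_contra hg
      exact hcon g⁻¹ (subset_tsupport _ hg)
    simp only [hφdef, this, integral_zero]
  have hsatclosed : ∀ i, IsClosed {b | ∃ g : G, g • b ∈ tsupport (f i)} := by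
    intro i
    have h1 : IsClosed {z : G × B | z.1 • z.2 ∈ tsupport (f i)} :=
      (isClosed_tsupport _).preimage continuous_smul
    have h2 := isClosedMap_snd_of_compactSpace (X := G) _ h1
    convert h2 using 1
    ext b
    exact ⟨fun ⟨g, hg⟩ => ⟨(g, b), hg, rfl⟩, fun ⟨⟨g, b'⟩, hg, hb⟩ => hb ▸ ⟨g, hg⟩⟩
  have hsatsub : ∀ i, {b | ∃ g : G, g • b ∈ tsupport (f i)} ⊆ U i := by
    intro i b ⟨g, hg⟩
    exact (hUmem i g b).2 (hf i hg)
  -- locally finite, with auxiliary tube construction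
  have haux : ∀ b : B, ∃ O : Set B, IsOpen O ∧ (∀ g : G, g • b ∈ O) ∧
      {i | (tsupport (f i) ∩ O).Nonempty}.Finite := by
    intro b
    have horb : IsCompact (range fun g : G => g • b) :=
      isCompact_range (continuous_id.smul continuous_const)
    have hLF : LocallyFinite fun i => tsupport (f i) := f.locallyFinite.closure
    choose t ht hfin using hLF
    have hKsub : (range fun g : G => g • b) ⊆ ⋃ k ∈ (range fun g : G => g • b), interior (t k) :=
      fun k hk => mem_biUnion hk (mem_interior_iff_mem_nhds.2 (ht k))
    obtain ⟨s, hssub, hs, hcov⟩ := horb.elim_finite_subcover_image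
      (fun k _ => isOpen_interior) hKsub
    refine ⟨⋃ k ∈ s, interior (t k), ?_, ?_, ?_⟩
    · exact isOpen_biUnion fun k _ => isOpen_interior
    · intro g; exact hcov (mem_range_self g)
    · refine Set.Finite.subset (Set.Finite.biUnion hs fun k _ => hfin k) ?_
      rintro i ⟨x, hxi, hxO⟩
      simp only [mem_iUnion] at hxO ⊢
      obtain ⟨k, hk, hxk⟩ := hxO
      exact ⟨k, hk, ⟨x, hxi, interior_subset hxk⟩⟩
  have hLFφ : LocallyFinite fun i => {b | φ i b ≠ 0} := by
    intro b
    obtain ⟨O, hOopen, hOorb, hOfin⟩ := haux b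
    refine ⟨{b' | ∀ g ∈ (univ : Set G), (fun z : B × G => z.2 • z.1) (b', g) ∈ O}, ?_, ?_⟩
    · refine mem_nhds_iff.2 ⟨_, Subset.rfl, ?_, fun g _ => hOorb g⟩
      exact isOpen_forall_mem' isCompact_univ (continuous_snd.smul continuous_fst) hOopen
    · refine Set.Finite.subset hOfin ?_
      rintro i ⟨b', hb'1, hb'2⟩
      obtain ⟨g, hg⟩ := hsupp i hb'1
      exact ⟨g • b', hg, hb'2 g (mem_univ g)⟩
  -- positivity
  have hpos : ∀ b, ∃ i, 0 < φ i b := by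
    intro b
    obtain ⟨O, hOopen, hOorb, hOfin⟩ := haux b
    have hsum : ∀ g : G, ∑ i ∈ hOfin.toFinset, f i (g⁻¹ • b) = 1 := by
      intro g
      have h1 := f.sum_eq_one (mem_univ (g⁻¹ • b))
      rw [← h1]
      refine (finsum_eq_sum_of_support_subset _ ?_).symm
      intro i hi
      have : g⁻¹ • b ∈ tsupport (f i) := subset_tsupport _ hi
      exact hOfin.mem_toFinset.2 ⟨g⁻¹ • b, this, hOorb g⁻¹⟩
    have h2 : ∑ i ∈ hOfin.toFinset, φ i b = 1 := by
      have := integral_finset_sum (μ := μ) hOfin.toFinset (f := fun i g => f i (g⁻¹ • b))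
        (fun i _ => hint i b)
      rw [hφdef]
      simp only []
      rw [← this]
      have : (fun g : G => ∑ i ∈ hOfin.toFinset, f i (g⁻¹ • b)) = fun _ => (1 : ℝ) := by
        funext g; exact hsum g
      rw [this]
      simp [measure_univ]
    by_contra hcon
    push_neg at hcon
    have : ∑ i ∈ hOfin.toFinset, φ i b = 0 :=
      Finset.sum_eq_zero fun i _ => le_antisymm (hcon i) (hnonneg i b)
    rw [this] at h2
    exact one_ne_zero h2.symm
  refine ⟨φ, ?_, hnonneg, hle1, hinvar, ?_, hLFφ, hpos⟩
  · intro i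
    exact continuous_avg μ (hcont' i)
  · intro i
    refine Subset.trans ?_ (hsatsub i)
    rw [← (hsatclosed i).closure_eq]
    exact closure_mono (hsupp i)

end Averaging


section Main

open Set Filter Topology MeasureTheory Pointwise unitInterval

/-- For a compact Hausdorff group `G` and a paracompact Hausdorff base `B`, every weakly
locally trivial `G`-fibration is a Hurewicz `G`-fibration. -/
theorem isHurewiczGFibration_of_weaklyLocallyTrivial
    (G : Type*) [Group G] [TopologicalSpace G] [IsTopologicalGroup G]
    [CompactSpace G] [T2Space G]
    {E B : Type*} [TopologicalSpace E] [TopologicalSpace B]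
    [ParacompactSpace B] [T2Space B]
    [MulAction G E] [MulAction G B] [ContinuousSMul G E] [ContinuousSMul G B]
    (p : E → B) (hp : Continuous p)
    (hpe : ∀ (g : G) (e : E), p (g • e) = g • p e)
    (hwlt : IsWeaklyLocallyTrivialGFibration G p hpe) :
    IsHurewiczGFibration G (fun (g : G) (e : E) => g • e) (fun (g : G) (b : B) => g • b)
      p := by
  intro X _ _ _ f F hf hF hfE hFE hF0
  by_cases hB : Nonempty B
  case neg =>
    have hXe : IsEmpty X := ⟨fun x => (not_nonempty_iff.1 hB).false (F (x, 0))⟩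
    refine ⟨fun z => (hXe.false z.1).elim, ?_, ?_, ?_, ?_⟩
    · apply continuous_iff_continuousAt.2
      intro z
      exact (hXe.false z.1).elim
    · intro g x t; exact (hXe.false x).elim
    · intro z; exact (hXe.false z.1).elim
    · intro x; exact (hXe.false x).elim
  case pos =>
    classical
    choose U hUo hUb hUinv ω hωC hωE hωP hωD using hwlt
    have hUmem : ∀ (i : B) (g : G) (b : B), b ∈ U i ↔ g • b ∈ U i := by
      intro i g b
      constructor
      · intro hb
        rw [← hUinv i g]
        exact smul_mem_smul_set hb
      · intro hb
        have h2 := smul_mem_smul_set (a := g⁻¹) hb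
        rwa [hUinv i g⁻¹, inv_smul_smul] at h2
    obtain ⟨φ, hφC, hφ0, hφ1, hφE, hφU, hφLF, hφpos⟩ :=
      exists_invariant_partition (G := G) U hUo (fun i g => hUinv i g) (fun b => ⟨b, hUb b⟩)
    set Om : B → B × E → E := fun i z =>
      if h : z.1 ∈ U i ∧ p z.2 ∈ U i then
        ((ω i (⟨z.1, h.1⟩, ⟨z.2, h.2⟩) : ↥(p ⁻¹' U i)) : E)
      else z.2 with hOmdef
    have hkey : ∀ (i : B) (z : B × E) (h : z.1 ∈ U i ∧ p z.2 ∈ U i),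
        Om i z = ((ω i (⟨z.1, h.1⟩, ⟨z.2, h.2⟩) : ↥(p ⁻¹' U i)) : E) := by
      intro i z h
      rw [hOmdef]
      simp only
      rw [dif_pos h]
    have hOmC : ∀ i, ContinuousOn (Om i) {z : B × E | z.1 ∈ U i ∧ p z.2 ∈ U i} := by
      intro i
      rw [continuousOn_iff_continuous_restrict]
      have hcomp : Continuous fun w : ↥{z : B × E | z.1 ∈ U i ∧ p z.2 ∈ U i} =>
          ((ω i (⟨w.1.1, w.2.1⟩, ⟨w.1.2, w.2.2⟩) : ↥(p ⁻¹' U i)) : E) := by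
        apply continuous_subtype_val.comp
        apply (hωC i).comp
        apply Continuous.prodMk
        · exact Continuous.subtype_mk (continuous_fst.comp continuous_subtype_val) _
        · exact Continuous.subtype_mk (continuous_snd.comp continuous_subtype_val) _
      apply hcomp.congr
      intro w
      exact (hkey i (↑w) w.2).symm
    have hOmP : ∀ i, ∀ z : B × E, z.1 ∈ U i → p z.2 ∈ U i → p (Om i z) = z.1 := by
      intro i z h1 h2
      rw [hOmdef]
      simp only
      rw [dif_pos ⟨h1, h2⟩]
      exact hωP i (⟨z.1, h1⟩, ⟨z.2, h2⟩)
    have hOmD : ∀ (i) (e : E), Om i (p e, e) = e := by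
      intro i e
      rw [hOmdef]
      simp only
      by_cases h : p e ∈ U i ∧ p (e : E) ∈ U i
      · rw [dif_pos h]
        have := hωD i ⟨e, h.2⟩
        exact congrArg Subtype.val this
      · rw [dif_neg h]
    have hOmE : ∀ (i) (g : G) (z : B × E), Om i (g • z.1, g • z.2) = g • Om i z := by
      intro i g z
      rw [hOmdef]
      simp only
      by_cases h : z.1 ∈ U i ∧ p z.2 ∈ U i
      · have h' : g • z.1 ∈ U i ∧ p (g • z.2) ∈ U i := by
          refine ⟨(hUmem i g z.1).1 h.1, ?_⟩
          rw [hpe]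
          exact (hUmem i g (p z.2)).1 h.2
        rw [dif_pos h, dif_pos h']
        exact hωE i g (⟨z.1, h.1⟩, ⟨z.2, h.2⟩)
      · have h' : ¬(g • z.1 ∈ U i ∧ p (g • z.2) ∈ U i) := by
          intro hc
          apply h
          refine ⟨(hUmem i g z.1).2 hc.1, ?_⟩
          have := hc.2
          rw [hpe] at this
          exact (hUmem i g (p z.2)).2 this
        rw [dif_neg h, dif_neg h']
    set Fr : X → ℝ → B := fun x t => F (x, Set.projIcc (0:ℝ) 1 zero_le_one t) with hFrdef
    have h0coe : Set.projIcc (0:ℝ) 1 zero_le_one (0:ℝ) = (0 : unitInterval) := by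
      apply Subtype.ext
      rw [Set.projIcc_left]
      rfl
    set P : LiftPack G E B X B :=
      { p := p
        U := U
        Om := Om
        φ := φ
        f := f
        Fr := Fr
        hpC := hp
        hUo := hUo
        hOmC := hOmC
        hOmP := hOmP
        hOmD := hOmD
        hOmE := hOmE
        hφC := hφC
        hφ0 := hφ0
        hφ1 := hφ1
        hφE := hφE
        hφU := hφU
        hφLF := hφLF
        hφpos := hφpos
        hFrC := hF.comp (continuous_fst.prodMk
          ((continuous_projIcc).comp continuous_snd))
        hfC := hf
        hpf := by
          intro x
          rw [hFrdef]
          simp only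
          rw [h0coe]
          exact (hF0 x).symm
        hFrE := by
          intro g x t
          rw [hFrdef]
          simp only
          exact hFE g x _
        hfE := hfE } with hPdef
    obtain ⟨Ft0, hc, he, hpp, hi⟩ := P.exists_lift
    refine ⟨fun w => Ft0 (w.1, (w.2 : ℝ)), ?_, ?_, ?_, ?_⟩
    · exact hc.comp (continuous_fst.prodMk (continuous_subtype_val.comp continuous_snd))
    · intro g x t
      exact he g (x, (t : ℝ))
    · rintro ⟨x, t⟩
      have h1 : p (Ft0 (x, (t : ℝ))) = Fr x (min (max (t : ℝ) 0) 1) := hpp (x, (t : ℝ))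
      have h2 : min (max (t : ℝ) 0) 1 = (t : ℝ) := by
        rw [max_eq_left t.2.1, min_eq_left t.2.2]
      show p (Ft0 (x, (t : ℝ))) = F (x, t)
      rw [h1, h2]
      show Fr x (t : ℝ) = F (x, t)
      rw [hFrdef]
      simp only
      congr 1
      rw [Set.projIcc_of_mem zero_le_one t.2]
    · intro x
      show Ft0 (x, ((0 : unitInterval) : ℝ)) = f x
      exact hi x


end Main
end
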